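/- arXiv:2503.04425 — 4 statements merged into one kernel-verified Lean document; each statement's English description precedes it below -/
import Mathlib

section
/- Let η : ℝ → ℝ be three times continuously differentiable with η(0) = η'(0) = η''(0) = 0. Then for all a, b, c ∈ ℝ: η(a+c) − η(a+b) − η'(a)(c−b) = (c−b) ∫₀¹∫₀¹∫₀¹ (b + x(c−b)) · (a + y(b + x(c−b))) · η'''(z (a + y(b + x(c−b)))) dz dy dx. -/
open Real

lemma aux_int (f : ℝ → ℝ) (hf : Differentiable ℝ f) (hf' : Continuous (deriv f)) (t : ℝ) :
    ∫ z in (0:ℝ)..1, t * deriv f (z * t) = f t - f 0 := by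
  have h : ∀ z ∈ Set.uIcc (0:ℝ) 1, HasDerivAt (fun z => f (z * t)) (t * deriv f (z * t)) z := by
    intro z _
    have := ((hf (z * t)).hasDerivAt).comp z ((hasDerivAt_id z).mul_const t)
    simpa [mul_comm, Function.comp_def] using this
  have hcont : Continuous fun z : ℝ => t * deriv f (z * t) :=
    continuous_const.mul (hf'.comp (continuous_id.mul continuous_const))
  simpa using intervalIntegral.integral_eq_sub_of_hasDerivAt h (hcont.intervalIntegrable _ _)

/-- the trilinear integral identity (equation (3.3)) for a C³ function η with
η(0) = η'(0) = η''(0) = 0. -/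
theorem stmt_6 (η : ℝ → ℝ) (hη : ContDiff ℝ 3 η)
    (h0 : η 0 = 0) (h1 : deriv η 0 = 0) (h2 : deriv (deriv η) 0 = 0) (a b c : ℝ) :
    η (a+c) - η (a+b) - deriv η a * (c-b) =
      (c-b) * ∫ x in (0:ℝ)..1, ∫ y in (0:ℝ)..1, ∫ z in (0:ℝ)..1,
        (b + x*(c-b)) * (a + y*(b + x*(c-b)))
          * iteratedDeriv 3 η (z*(a + y*(b + x*(c-b)))) := by
  have hη' : ContDiff ℝ 2 (deriv η) :=
    ((contDiff_succ_iff_deriv.mp (show ContDiff ℝ (2+1) η from by exact_mod_cast hη))).2.2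
  have hη'' : ContDiff ℝ 1 (deriv (deriv η)) :=
    ((contDiff_succ_iff_deriv.mp (show ContDiff ℝ (1+1) (deriv η) from by exact_mod_cast hη'))).2.2
  have hd3 : Continuous (deriv (deriv (deriv η))) :=
    ((contDiff_succ_iff_deriv.mp
      (show ContDiff ℝ (0+1) (deriv (deriv η)) from by exact_mod_cast hη''))).2.2.continuous
  have hit : iteratedDeriv 3 η = deriv (deriv (deriv η)) := by
    simp [show (3:ℕ) = 0+1+1+1 from rfl, iteratedDeriv_succ, iteratedDeriv_zero]
  -- innermost integral
  have inner : ∀ s u : ℝ, (∫ z in (0:ℝ)..1, s * u * iteratedDeriv 3 η (z * u))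
      = s * deriv (deriv η) u := by
    intro s u
    rw [hit]
    have := aux_int (deriv (deriv η)) (hη''.differentiable one_ne_zero) hd3 u
    calc (∫ z in (0:ℝ)..1, s * u * deriv (deriv (deriv η)) (z * u))
        = s * ∫ z in (0:ℝ)..1, u * deriv (deriv (deriv η)) (z * u) := by
          rw [← intervalIntegral.integral_const_mul]; congr 1; ext z; ring
      _ = s * deriv (deriv η) u := by rw [this, h2, sub_zero]
  -- middle integral
  have middle : ∀ s : ℝ, (∫ y in (0:ℝ)..1, s * deriv (deriv η) (a + y * s))
      = deriv η (a + s) - deriv η a := by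
    intro s
    have hdf : Differentiable ℝ (fun u => deriv η (a + u)) :=
      (hη'.differentiable (by norm_num)).comp (differentiable_const _ |>.add differentiable_id)
    have hde : deriv (fun u => deriv η (a + u)) = fun u => deriv (deriv η) (a + u) := by
      funext u; exact deriv_comp_const_add _ _ _
    have hdc : Continuous (deriv (fun u => deriv η (a + u))) := by
      rw [hde]; exact hη''.continuous.comp (continuous_const.add continuous_id)
    have := aux_int _ hdf hdc s
    rw [hde] at this
    simpa [mul_comm] using this
  -- outer
  have houter : ∀ x : ℝ, (∫ y in (0:ℝ)..1, ∫ z in (0:ℝ)..1,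
        (b + x*(c-b)) * (a + y*(b + x*(c-b)))
          * iteratedDeriv 3 η (z*(a + y*(b + x*(c-b)))))
      = deriv η (a + (b + x*(c-b))) - deriv η a := by
    intro x
    have : ∀ y : ℝ, (∫ z in (0:ℝ)..1,
        (b + x*(c-b)) * (a + y*(b + x*(c-b)))
          * iteratedDeriv 3 η (z*(a + y*(b + x*(c-b)))))
        = (b + x*(c-b)) * deriv (deriv η) (a + y * (b + x*(c-b))) := fun y => inner _ _
    rw [intervalIntegral.integral_congr (g := fun y =>
      (b + x*(c-b)) * deriv (deriv η) (a + y * (b + x*(c-b)))) (fun y _ => this y)]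
    exact middle _
  rw [intervalIntegral.integral_congr (g := fun x =>
      deriv η (a + (b + x*(c-b))) - deriv η a) (fun x _ => houter x)]
  -- final step
  have hdf : Differentiable ℝ (fun u => η ((a+b) + u)) :=
    (hη.differentiable (by norm_num)).comp (differentiable_const _ |>.add differentiable_id)
  have hde : deriv (fun u => η ((a+b) + u)) = fun u => deriv η ((a+b) + u) := by
    funext u; exact deriv_comp_const_add _ _ _
  have hdc : Continuous (deriv (fun u => η ((a+b) + u))) := by
    rw [hde]; exact (hη'.continuous).comp (continuous_const.add continuous_id)
  have key := aux_int _ hdf hdc (c - b)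
  rw [hde] at key
  simp only at key
  have hsplit : (∫ x in (0:ℝ)..1, (deriv η (a + (b + x*(c-b))) - deriv η a))
      = (∫ x in (0:ℝ)..1, deriv η (a + (b + x*(c-b)))) - ∫ x in (0:ℝ)..1, (deriv η a : ℝ) := by
    apply intervalIntegral.integral_sub
    · exact ((hη'.continuous.comp (by continuity)).intervalIntegrable _ _)
    · exact intervalIntegrable_const
  have hmain : (c - b) * ∫ x in (0:ℝ)..1, deriv η (a + (b + x*(c-b)))
      = η (a + c) - η (a + b) := by
    rw [← intervalIntegral.integral_const_mul]
    have : ∀ x : ℝ, (c - b) * deriv η (a + (b + x*(c-b)))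
        = (c - b) * deriv η ((a+b) + x * (c-b)) := by
      intro x; rw [show a + (b + x*(c-b)) = (a+b) + x*(c-b) by ring]
    rw [intervalIntegral.integral_congr (g := fun x => (c-b) * deriv η ((a+b) + x*(c-b)))
      (fun x _ => this x)]
    rw [key]
    ring_nf
  have hfin : (c - b) * ∫ x in (0:ℝ)..1, (deriv η (a + (b + x*(c-b))) - deriv η a)
      = η (a+c) - η (a+b) - deriv η a * (c-b) := by
    rw [hsplit, intervalIntegral.integral_const, mul_sub, hmain]
    simp only [smul_eq_mul, sub_zero, one_mul]
    ring
  rw [hfin]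
end

section
/- Let r₀ ∈ ℝ, let b, c : [r₀,∞) → ℝ be continuous, and suppose v ∈ C²([r₀,∞)) satisfies v''(r) + b(r) v'(r) + c(r) v(r) = 0 for all r ≥ r₀, where there exist constants C > 0 and γ > 1/2 such that |b(r) − 3| ≤ C e^{−2r} and |c(r) − 2| ≤ C e^{−2γ r} for all r ≥ r₀. Then there exist real numbers L₁, L₂ such that e^r v(r) → L₁, e^r v'(r) → −L₁ and e^{2r}(v(r) + v'(r)) → L₂ as r → ∞; in particular there is C' > 0 with |v(r)| ≤ C' e^{−r}, |v'(r)| ≤ C' e^{−r} and |v(r) + v'(r)| ≤ C' e^{−2r} for all r ≥ r₀. -/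
open Real Set Filter

set_option maxHeartbeats 1000000

/-- asymptotics for second-order linear ODEs whose coefficients converge
exponentially to those of v'' + 3v' + 2v = 0: e^r v(r) and e^{2r}(v(r) + v'(r)) converge,
with the corresponding exponential decay bounds. Here v', v'' denote the first and second
derivative of v on [r₀,∞) (one-sided at the endpoint). -/
theorem stmt_11 (r₀ : ℝ) (b c : ℝ → ℝ)
    (hb : ContinuousOn b (Ici r₀)) (hc : ContinuousOn c (Ici r₀))
    (v v' v'' : ℝ → ℝ)
    (hv : ∀ r ≥ r₀, HasDerivWithinAt v (v' r) (Ici r₀) r)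
    (hv' : ∀ r ≥ r₀, HasDerivWithinAt v' (v'' r) (Ici r₀) r)
    (hv''cont : ContinuousOn v'' (Ici r₀))
    (hode : ∀ r ≥ r₀, v'' r + b r * v' r + c r * v r = 0)
    (C γ : ℝ) (hC : 0 < C) (hγ : 1/2 < γ)
    (hbdecay : ∀ r ≥ r₀, |b r - 3| ≤ C * Real.exp (-2*r))
    (hcdecay : ∀ r ≥ r₀, |c r - 2| ≤ C * Real.exp (-2*γ*r)) :
    ∃ L₁ L₂ : ℝ,
      Tendsto (fun r => Real.exp r * v r) atTop (nhds L₁) ∧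
      Tendsto (fun r => Real.exp r * v' r) atTop (nhds (-L₁)) ∧
      Tendsto (fun r => Real.exp (2*r) * (v r + v' r)) atTop (nhds L₂) ∧
      ∃ C' > (0:ℝ), ∀ r ≥ r₀,
        |v r| ≤ C' * Real.exp (-r) ∧ |v' r| ≤ C' * Real.exp (-r) ∧
        |v r + v' r| ≤ C' * Real.exp (-2*r) := by
  -- basic constants
  set r₁ : ℝ := max r₀ 0 with hr₁def
  have hr₀r₁ : r₀ ≤ r₁ := le_max_left _ _
  have hr₁0 : (0:ℝ) ≤ r₁ := le_max_right _ _
  set δ : ℝ := min 2 (2*γ) with hδdef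
  have hδ1 : 1 < δ := lt_min one_lt_two (by linarith)
  have hδ2 : δ ≤ 2 := min_le_left _ _
  have hδγ : δ ≤ 2*γ := min_le_right _ _
  -- the auxiliary functions
  set u : ℝ → ℝ := fun r => v r + v' r with hu_def
  set w : ℝ → ℝ := fun r => v' r + 2 * v r with hw_def
  set f : ℝ → ℝ := fun r => -((b r - 3) * v' r + (c r - 2) * v r) with hf_def
  have hveq : ∀ r, v r = w r - u r := by intro r; simp only [hu_def, hw_def]; ring
  have hv'eq : ∀ r, v' r = 2 * u r - w r := by intro r; simp only [hu_def, hw_def]; ring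
  have hu' : ∀ r ≥ r₀, HasDerivWithinAt u (-2 * u r + f r) (Ici r₀) r := by
    intro r hr
    have h := (hv r hr).add (hv' r hr)
    refine h.congr_deriv (Eq.symm ?_)
    simp only [hu_def, hf_def]
    linear_combination -(hode r hr)
  have hw' : ∀ r ≥ r₀, HasDerivWithinAt w (-w r + f r) (Ici r₀) r := by
    intro r hr
    have h := (hv' r hr).add ((hv r hr).const_mul 2)
    refine h.congr_deriv (Eq.symm ?_)
    simp only [hu_def, hw_def, hf_def]
    linear_combination -(hode r hr)
  -- continuity
  have hvc : ContinuousOn v (Ici r₀) := fun r hr => (hv r hr).continuousWithinAt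
  have hv'c : ContinuousOn v' (Ici r₀) := fun r hr => (hv' r hr).continuousWithinAt
  have hfc : ContinuousOn f (Ici r₀) := by
    simp only [hf_def]
    exact (((hb.sub continuousOn_const).mul hv'c).add
      ((hc.sub continuousOn_const).mul hvc)).neg
  -- pointwise bound on f
  have hfbd : ∀ x, r₁ ≤ x → |f x| ≤ C * Real.exp (-δ*x) * (3 * |u x| + 2 * |w x|) := by
    intro x hx
    have hx0 : (0:ℝ) ≤ x := le_trans hr₁0 hx
    have hxr₀ : r₀ ≤ x := le_trans hr₀r₁ hx
    have e1 : Real.exp (-2*x) ≤ Real.exp (-δ*x) := by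
      apply Real.exp_le_exp.2; nlinarith
    have e2 : Real.exp (-2*γ*x) ≤ Real.exp (-δ*x) := by
      apply Real.exp_le_exp.2; nlinarith
    have hv'b : |v' x| ≤ 2 * |u x| + |w x| := by
      rw [hv'eq x]
      calc |2 * u x - w x| ≤ |2 * u x| + |w x| := abs_sub _ _
        _ = 2 * |u x| + |w x| := by rw [abs_mul]; norm_num
    have hvb : |v x| ≤ |u x| + |w x| := by
      rw [hveq x]
      calc |w x - u x| ≤ |w x| + |u x| := abs_sub _ _
        _ = |u x| + |w x| := by ring
    have h1 : |f x| ≤ |b x - 3| * |v' x| + |c x - 2| * |v x| := by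
      simp only [hf_def]
      rw [abs_neg]
      calc |(b x - 3) * v' x + (c x - 2) * v x|
          ≤ |(b x - 3) * v' x| + |(c x - 2) * v x| := abs_add_le _ _
        _ = |b x - 3| * |v' x| + |c x - 2| * |v x| := by rw [abs_mul, abs_mul]
    have h2 : |b x - 3| * |v' x| ≤ C * Real.exp (-δ*x) * |v' x| :=
      mul_le_mul_of_nonneg_right (le_trans (hbdecay x hxr₀)
        (mul_le_mul_of_nonneg_left e1 hC.le)) (abs_nonneg _)
    have h3 : |c x - 2| * |v x| ≤ C * Real.exp (-δ*x) * |v x| :=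
      mul_le_mul_of_nonneg_right (le_trans (hcdecay x hxr₀)
        (mul_le_mul_of_nonneg_left e2 hC.le)) (abs_nonneg _)
    have hpos : 0 < C * Real.exp (-δ*x) := by positivity
    nlinarith [hpos, hv'b, hvb]
  -- the Lyapunov function
  set P : ℝ → ℝ := fun r => Real.exp (4*r) * u r ^ 2 + Real.exp (2*r) * w r ^ 2 with hP_def
  have hPnonneg : ∀ r, 0 ≤ P r := by intro r; simp only [hP_def]; positivity
  have hP' : ∀ r ≥ r₀, HasDerivWithinAt P
      (2 * Real.exp (4*r) * u r * f r + 2 * Real.exp (2*r) * w r * f r) (Ici r₀) r := by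
    intro r hr
    have hexp4 : HasDerivAt (fun s : ℝ => Real.exp (4*s)) (Real.exp (4*r) * 4) r := by
      have h : HasDerivAt (fun s : ℝ => 4*s) 4 r := by simpa using (hasDerivAt_id r).const_mul (4:ℝ)
      exact h.exp
    have hexp2 : HasDerivAt (fun s : ℝ => Real.exp (2*s)) (Real.exp (2*r) * 2) r := by
      have h : HasDerivAt (fun s : ℝ => 2*s) 2 r := by simpa using (hasDerivAt_id r).const_mul (2:ℝ)
      exact h.exp
    have h := (hexp4.hasDerivWithinAt.mul ((hu' r hr).pow 2)).add
      (hexp2.hasDerivWithinAt.mul ((hw' r hr).pow 2))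
    refine h.congr_deriv (Eq.symm ?_)
    simp only [Nat.cast_ofNat, pow_one, Pi.pow_apply]
    ring
  -- key differential inequality for P, for r ≥ r₁
  have hkey : ∀ x, r₁ ≤ x →
      2 * Real.exp (4*x) * u x * f x + 2 * Real.exp (2*x) * w x * f x
        ≤ (12*C) * Real.exp ((1-δ)*x) * P x := by
    intro x hx
    have hx0 : (0:ℝ) ≤ x := le_trans hr₁0 hx
    have hF := hfbd x hx
    set A := |u x| with hA_def
    set B := |w x| with hB_def
    have hA : 0 ≤ A := abs_nonneg _
    have hB : 0 ≤ B := abs_nonneg _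
    set E1 := Real.exp x with hE1_def
    have hE1pos : 0 < E1 := Real.exp_pos _
    have hE1ge : 1 ≤ E1 := Real.one_le_exp hx0
    set Ed := Real.exp (-δ*x) with hEd_def
    have hEdpos : 0 < Ed := Real.exp_pos _
    have hE2 : Real.exp (2*x) = E1^2 := by rw [hE1_def, ← Real.exp_nat_mul]; norm_num
    have hE4 : Real.exp (4*x) = E1^4 := by rw [hE1_def, ← Real.exp_nat_mul]; norm_num
    have hG : Real.exp ((1-δ)*x) = E1 * Ed := by
      rw [hE1_def, hEd_def, ← Real.exp_add]; ring_nf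
    have huf : u x * f x ≤ A * |f x| := by
      calc u x * f x ≤ |u x * f x| := le_abs_self _
        _ = A * |f x| := abs_mul _ _
    have hwf : w x * f x ≤ B * |f x| := by
      calc w x * f x ≤ |w x * f x| := le_abs_self _
        _ = B * |f x| := abs_mul _ _
    have hfabs : 0 ≤ |f x| := abs_nonneg _
    have hP_eq : P x = E1^4 * A^2 + E1^2 * B^2 := by
      simp only [hP_def, hE4, hE2, hA_def, hB_def, sq_abs]
    rw [hP_eq, hE4, hE2, hG]
    have step1 : 2 * E1^4 * (u x * f x) + 2 * E1^2 * (w x * f x)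
        ≤ 2 * E1^4 * (A * |f x|) + 2 * E1^2 * (B * |f x|) := by
      have t1 : 2 * E1^4 * (u x * f x) ≤ 2 * E1^4 * (A * |f x|) :=
        mul_le_mul_of_nonneg_left huf (by positivity)
      have t2 : 2 * E1^2 * (w x * f x) ≤ 2 * E1^2 * (B * |f x|) :=
        mul_le_mul_of_nonneg_left hwf (by positivity)
      linarith
    have hFbd : |f x| ≤ C * Ed * (3*A + 2*B) := hF
    have step2 : 2 * E1^4 * (A * |f x|) + 2 * E1^2 * (B * |f x|)
        ≤ 2 * E1^4 * (A * (C * Ed * (3*A + 2*B))) + 2 * E1^2 * (B * (C * Ed * (3*A + 2*B))) := by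
      have t1 : A * |f x| ≤ A * (C * Ed * (3*A + 2*B)) := mul_le_mul_of_nonneg_left hFbd hA
      have t2 : B * |f x| ≤ B * (C * Ed * (3*A + 2*B)) := mul_le_mul_of_nonneg_left hFbd hB
      have t3 := mul_le_mul_of_nonneg_left t1 (show (0:ℝ) ≤ 2 * E1^4 by positivity)
      have t4 := mul_le_mul_of_nonneg_left t2 (show (0:ℝ) ≤ 2 * E1^2 by positivity)
      linarith
    have step3 : 2 * E1^4 * (A * (C * Ed * (3*A + 2*B))) + 2 * E1^2 * (B * (C * Ed * (3*A + 2*B)))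
        ≤ 12*C * (E1 * Ed) * (E1^4 * A^2 + E1^2 * B^2) := by
      have key : 2 * E1^4 * (A * (3*A + 2*B)) + 2 * E1^2 * (B * (3*A + 2*B))
          ≤ 12 * E1 * (E1^4 * A^2 + E1^2 * B^2) := by
        nlinarith [mul_nonneg (mul_nonneg (pow_nonneg hE1pos.le 3) hA) hB,
          mul_nonneg (pow_nonneg hE1pos.le 3) (sq_nonneg (E1*A - B)),
          mul_nonneg (mul_nonneg (pow_nonneg hE1pos.le 4) hA) hA,
          mul_nonneg (mul_nonneg (pow_nonneg hE1pos.le 2) hB) hB,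
          mul_nonneg (mul_nonneg (mul_nonneg (sub_nonneg.2 hE1ge) (pow_nonneg hE1pos.le 4)) hA) hA,
          mul_nonneg (mul_nonneg (mul_nonneg (sub_nonneg.2 hE1ge) (pow_nonneg hE1pos.le 2)) hB) hB]
      have := mul_le_mul_of_nonneg_left key (mul_nonneg hC.le hEdpos.le)
      nlinarith [this]
    calc 2 * E1^4 * u x * f x + 2 * E1^2 * w x * f x
        = 2 * E1^4 * (u x * f x) + 2 * E1^2 * (w x * f x) := by ring
      _ ≤ 2 * E1^4 * (A * |f x|) + 2 * E1^2 * (B * |f x|) := step1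
      _ ≤ 2 * E1^4 * (A * (C * Ed * (3*A + 2*B))) + 2 * E1^2 * (B * (C * Ed * (3*A + 2*B))) := step2
      _ ≤ 12*C * (E1 * Ed) * (E1^4 * A^2 + E1^2 * B^2) := step3

  -- integrating factor
  set K : ℝ := 12*C with hK_def
  have hδ1' : (0:ℝ) < δ - 1 := by linarith
  have hδne : δ - 1 ≠ 0 := ne_of_gt hδ1'
  set c₀ : ℝ := K/(δ-1) with hc₀_def
  have hc₀pos : 0 < c₀ := by rw [hc₀_def, hK_def]; positivity
  obtain ⟨E, hE_def⟩ : ∃ E : ℝ → ℝ, E = fun r => Real.exp (c₀ * Real.exp ((1-δ)*r)) := ⟨_, rfl⟩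
  have hEpos : ∀ r, 0 < E r := by intro r; rw [hE_def]; positivity
  have hEone : ∀ r, 1 ≤ E r := by
    intro r; rw [hE_def]
    exact Real.one_le_exp (by positivity)
  have hE' : ∀ r : ℝ, HasDerivAt E (-(K * Real.exp ((1-δ)*r)) * E r) r := by
    intro r
    have h1 : HasDerivAt (fun s : ℝ => (1-δ)*s) (1-δ) r := by
      simpa using (hasDerivAt_id r).const_mul (1-δ)
    have h2 : HasDerivAt (fun s : ℝ => c₀ * Real.exp ((1-δ)*s))
        (c₀ * (Real.exp ((1-δ)*r) * (1-δ))) r := h1.exp.const_mul c₀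
    have h3 := h2.exp
    rw [hE_def]
    convert h3 using 1
    rw [hc₀_def]
    field_simp
    ring
  have hQ' : ∀ r, r₀ ≤ r → HasDerivWithinAt (fun s => P s * E s)
      ((2 * Real.exp (4*r) * u r * f r + 2 * Real.exp (2*r) * w r * f r) * E r
        + P r * (-(K * Real.exp ((1-δ)*r)) * E r)) (Ici r₀) r := by
    intro r hr
    exact (hP' r hr).mul (hE' r).hasDerivWithinAt
  have hsub : Ici r₁ ⊆ Ici r₀ := Ici_subset_Ici.2 hr₀r₁
  have hQanti : AntitoneOn (fun s => P s * E s) (Ici r₁) := by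
    apply antitoneOn_of_deriv_nonpos (convex_Ici r₁)
    · intro x hx
      exact ((hQ' x (hsub hx)).continuousWithinAt).mono hsub
    · rw [interior_Ici]
      intro x hx
      have hx₀ : r₀ < x := lt_of_le_of_lt hr₀r₁ hx
      exact ((hQ' x hx₀.le).hasDerivAt (Ici_mem_nhds hx₀)).differentiableAt.differentiableWithinAt
    · rw [interior_Ici]
      intro x hx
      have hx₀ : r₀ < x := lt_of_le_of_lt hr₀r₁ hx
      have hd := (hQ' x hx₀.le).hasDerivAt (Ici_mem_nhds hx₀)
      rw [hd.deriv]
      have h1 := hkey x (le_of_lt hx)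
      have h2 : 2 * Real.exp (4*x) * u x * f x + 2 * Real.exp (2*x) * w x * f x
          - K * Real.exp ((1-δ)*x) * P x ≤ 0 := by
        linarith
      have h3 := mul_nonpos_of_nonpos_of_nonneg h2 (hEpos x).le
      nlinarith [h3]
  have hPbound : ∀ r, r₁ ≤ r → P r ≤ P r₁ * E r₁ := by
    intro r hr
    have h1 : P r ≤ P r * E r := le_mul_of_one_le_right (hPnonneg r) (hEone r)
    have h2 : P r * E r ≤ P r₁ * E r₁ := hQanti self_mem_Ici hr hr
    linarith
  set M : ℝ := Real.sqrt (P r₁ * E r₁) with hM_def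
  have hMnn : 0 ≤ M := Real.sqrt_nonneg _
  have hUbd : ∀ r, r₁ ≤ r → Real.exp (2*r) * |u r| ≤ M := by
    intro r hr
    have e2 : Real.exp (2*r)^2 = Real.exp (4*r) := by
      rw [show (4:ℝ)*r = 2*r+2*r by ring, Real.exp_add]; ring
    have h1 : (Real.exp (2*r) * |u r|)^2 ≤ P r₁ * E r₁ := by
      calc (Real.exp (2*r) * |u r|)^2 = Real.exp (4*r) * u r ^ 2 := by
            rw [mul_pow, sq_abs, e2]
        _ ≤ P r := by
            simp only [hP_def]
            nlinarith [Real.exp_pos (2*r), sq_nonneg (w r)]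
        _ ≤ P r₁ * E r₁ := hPbound r hr
    calc Real.exp (2*r) * |u r| = Real.sqrt ((Real.exp (2*r) * |u r|)^2) :=
          (Real.sqrt_sq (by positivity)).symm
      _ ≤ M := by rw [hM_def]; exact Real.sqrt_le_sqrt h1
  have hWbd : ∀ r, r₁ ≤ r → Real.exp r * |w r| ≤ M := by
    intro r hr
    have e2 : Real.exp r^2 = Real.exp (2*r) := by
      rw [show (2:ℝ)*r = r+r by ring, Real.exp_add]; ring
    have h1 : (Real.exp r * |w r|)^2 ≤ P r₁ * E r₁ := by
      calc (Real.exp r * |w r|)^2 = Real.exp (2*r) * w r ^ 2 := by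
            rw [mul_pow, sq_abs, e2]
        _ ≤ P r := by
            simp only [hP_def]
            nlinarith [Real.exp_pos (4*r), sq_nonneg (u r)]
        _ ≤ P r₁ * E r₁ := hPbound r hr
    calc Real.exp r * |w r| = Real.sqrt ((Real.exp r * |w r|)^2) :=
          (Real.sqrt_sq (by positivity)).symm
      _ ≤ M := by rw [hM_def]; exact Real.sqrt_le_sqrt h1
  -- decay of the forcing term
  have hfM : ∀ s, r₁ ≤ s → Real.exp (2*s) * |f s| ≤ 6*C*M*Real.exp ((1-δ)*s) := by
    intro s hs
    have hs0 : (0:ℝ) ≤ s := le_trans hr₁0 hs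
    have h1 := hfbd s hs
    have hu1 := hUbd s hs
    have hw1 := hWbd s hs
    have hes : 1 ≤ Real.exp s := Real.one_le_exp hs0
    have he2 : Real.exp (2*s) = Real.exp s * Real.exp s := by
      rw [← Real.exp_add]; ring_nf
    have hG : Real.exp ((1-δ)*s) = Real.exp s * Real.exp (-δ*s) := by
      rw [← Real.exp_add]; ring_nf
    have hedpos : 0 < Real.exp (-δ*s) := Real.exp_pos _
    have hespos : 0 < Real.exp s := Real.exp_pos _
    have hstep : Real.exp (2*s) * |f s| ≤ Real.exp (2*s) * (C * Real.exp (-δ*s) * (3 * |u s| + 2 * |w s|)) :=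
      mul_le_mul_of_nonneg_left h1 (Real.exp_pos _).le
    rw [hG]
    rw [he2] at hstep hu1 ⊢
    nlinarith [mul_le_mul_of_nonneg_left hw1 (mul_nonneg (mul_nonneg hC.le hedpos.le) hespos.le),
      mul_le_mul_of_nonneg_left hu1 (mul_nonneg hC.le hedpos.le),
      abs_nonneg (u s), abs_nonneg (w s),
      mul_pos hC hedpos, mul_nonneg (mul_nonneg hC.le hedpos.le) (sub_nonneg.2 hes)]

  -- the derivative facts for e^{2r} u and e^r w
  have hUder : ∀ s, r₀ ≤ s → HasDerivWithinAt (fun t => Real.exp (2*t) * u t)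
      (Real.exp (2*s) * f s) (Ici r₀) s := by
    intro s hs
    have hexp2 : HasDerivAt (fun t : ℝ => Real.exp (2*t)) (Real.exp (2*s) * 2) s := by
      have h : HasDerivAt (fun t : ℝ => 2*t) 2 s := by simpa using (hasDerivAt_id s).const_mul (2:ℝ)
      exact h.exp
    have h := hexp2.hasDerivWithinAt.mul (hu' s hs)
    refine h.congr_deriv (Eq.symm ?_)
    ring
  have hWder : ∀ s, r₀ ≤ s → HasDerivWithinAt (fun t => Real.exp t * w t)
      (Real.exp s * f s) (Ici r₀) s := by
    intro s hs
    have h := (Real.hasDerivAt_exp s).hasDerivWithinAt.mul (hw' s hs)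
    refine h.congr_deriv (Eq.symm ?_)
    ring
  -- continuity and integrability of the forcing integrands
  have hg2cont : ContinuousOn (fun s => Real.exp (2*s) * f s) (Ici r₀) :=
    ((Real.continuous_exp.comp (continuous_const.mul continuous_id)).continuousOn).mul hfc
  have hg1cont : ContinuousOn (fun s => Real.exp s * f s) (Ici r₀) :=
    Real.continuous_exp.continuousOn.mul hfc
  have hIoisub : Ioi r₁ ⊆ Ici r₀ := fun x hx => le_trans hr₀r₁ (le_of_lt hx)
  have hdom : MeasureTheory.Integrable
      (fun s => 6*C*M * Real.exp (-(δ-1)*s)) (MeasureTheory.volume.restrict (Ioi r₁)) :=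
    (exp_neg_integrableOn_Ioi r₁ hδ1').const_mul (6*C*M)
  have habs2 : ∀ s, r₁ < s → |Real.exp (2*s) * f s| ≤ 6*C*M * Real.exp (-(δ-1)*s) := by
    intro s hs
    have h := hfM s (le_of_lt hs)
    rw [abs_mul, abs_of_pos (Real.exp_pos _)]
    calc Real.exp (2*s) * |f s| ≤ 6*C*M * Real.exp ((1-δ)*s) := h
      _ = 6*C*M * Real.exp (-(δ-1)*s) := by rw [show (1-δ)*s = -(δ-1)*s by ring]
  have hg2int : MeasureTheory.IntegrableOn (fun s => Real.exp (2*s) * f s) (Ioi r₁) := by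
    apply MeasureTheory.Integrable.mono' hdom
      ((hg2cont.mono hIoisub).aestronglyMeasurable measurableSet_Ioi)
    filter_upwards [MeasureTheory.ae_restrict_mem measurableSet_Ioi] with s hs
    rw [Real.norm_eq_abs]
    exact habs2 s hs
  have hg1int : MeasureTheory.IntegrableOn (fun s => Real.exp s * f s) (Ioi r₁) := by
    apply MeasureTheory.Integrable.mono' hdom
      ((hg1cont.mono hIoisub).aestronglyMeasurable measurableSet_Ioi)
    filter_upwards [MeasureTheory.ae_restrict_mem measurableSet_Ioi] with s hs
    rw [Real.norm_eq_abs, abs_mul, abs_of_pos (Real.exp_pos _)]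
    have hs0 : (0:ℝ) ≤ s := le_trans hr₁0 (le_of_lt hs)
    have h1 : Real.exp s ≤ Real.exp (2*s) := Real.exp_le_exp.2 (by linarith)
    calc Real.exp s * |f s| ≤ Real.exp (2*s) * |f s| :=
          mul_le_mul_of_nonneg_right h1 (abs_nonneg _)
      _ ≤ 6*C*M * Real.exp (-(δ-1)*s) := by
          have := habs2 s hs
          rwa [abs_mul, abs_of_pos (Real.exp_pos _)] at this
  -- fundamental theorem of calculus
  have hFTC2 : ∀ r, r₁ ≤ r →
      (∫ s in r₁..r, Real.exp (2*s) * f s) = Real.exp (2*r) * u r - Real.exp (2*r₁) * u r₁ := by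
    intro r hr
    apply intervalIntegral.integral_eq_sub_of_hasDeriv_right_of_le hr
    · intro x hx
      exact ((hUder x (le_trans hr₀r₁ hx.1)).continuousWithinAt).mono
        (fun y hy => le_trans hr₀r₁ hy.1)
    · intro x hx
      exact (hUder x (le_trans hr₀r₁ hx.1.le)).mono
        (fun y hy => le_trans (le_trans hr₀r₁ hx.1.le) (le_of_lt hy))
    · apply ContinuousOn.intervalIntegrable
      rw [uIcc_of_le hr]
      exact hg2cont.mono (fun y hy => le_trans hr₀r₁ hy.1)
  have hFTC1 : ∀ r, r₁ ≤ r →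
      (∫ s in r₁..r, Real.exp s * f s) = Real.exp r * w r - Real.exp r₁ * w r₁ := by
    intro r hr
    apply intervalIntegral.integral_eq_sub_of_hasDeriv_right_of_le hr
    · intro x hx
      exact ((hWder x (le_trans hr₀r₁ hx.1)).continuousWithinAt).mono
        (fun y hy => le_trans hr₀r₁ hy.1)
    · intro x hx
      exact (hWder x (le_trans hr₀r₁ hx.1.le)).mono
        (fun y hy => le_trans (le_trans hr₀r₁ hx.1.le) (le_of_lt hy))
    · apply ContinuousOn.intervalIntegrable
      rw [uIcc_of_le hr]
      exact hg1cont.mono (fun y hy => le_trans hr₀r₁ hy.1)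
  -- the limits
  have hTendU : Tendsto (fun r => Real.exp (2*r) * u r) atTop
      (nhds (Real.exp (2*r₁) * u r₁ + ∫ s in Ioi r₁, Real.exp (2*s) * f s)) := by
    have h := MeasureTheory.intervalIntegral_tendsto_integral_Ioi r₁ hg2int tendsto_id
    have h2 := h.const_add (Real.exp (2*r₁) * u r₁)
    apply h2.congr'
    filter_upwards [eventually_ge_atTop r₁] with r hr
    simp only [id_eq]
    rw [hFTC2 r hr]; ring
  have hTendW : Tendsto (fun r => Real.exp r * w r) atTop
      (nhds (Real.exp r₁ * w r₁ + ∫ s in Ioi r₁, Real.exp s * f s)) := by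
    have h := MeasureTheory.intervalIntegral_tendsto_integral_Ioi r₁ hg1int tendsto_id
    have h2 := h.const_add (Real.exp r₁ * w r₁)
    apply h2.congr'
    filter_upwards [eventually_ge_atTop r₁] with r hr
    simp only [id_eq]
    rw [hFTC1 r hr]; ring
  have hTendUexp : Tendsto (fun r => Real.exp r * u r) atTop (nhds 0) := by
    have h := Real.tendsto_exp_neg_atTop_nhds_zero.mul hTendU
    rw [zero_mul] at h
    apply h.congr
    intro r
    rw [← mul_assoc, ← Real.exp_add]
    congr 1
    ring
  refine ⟨Real.exp r₁ * w r₁ + ∫ s in Ioi r₁, Real.exp s * f s,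
    Real.exp (2*r₁) * u r₁ + ∫ s in Ioi r₁, Real.exp (2*s) * f s, ?_, ?_, ?_, ?_⟩
  · have h := hTendW.sub hTendUexp
    rw [sub_zero] at h
    apply h.congr
    intro r
    rw [hveq r]
    ring
  · have h := (hTendUexp.const_mul 2).sub hTendW
    rw [mul_zero, zero_sub] at h
    apply h.congr
    intro r
    rw [hv'eq r]
    ring
  · apply hTendU.congr
    intro r
    simp only [hu_def]
  · -- the uniform bounds
    have huc : ContinuousOn u (Ici r₀) := by
      rw [hu_def]; exact hvc.add hv'c
    obtain ⟨N₁, hN₁⟩ := (isCompact_Icc (a := r₀) (b := r₁)).exists_bound_of_continuousOn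
      (Real.continuous_exp.continuousOn.mul (hvc.mono Icc_subset_Ici_self))
    obtain ⟨N₂, hN₂⟩ := (isCompact_Icc (a := r₀) (b := r₁)).exists_bound_of_continuousOn
      (Real.continuous_exp.continuousOn.mul (hv'c.mono Icc_subset_Ici_self))
    obtain ⟨N₃, hN₃⟩ := (isCompact_Icc (a := r₀) (b := r₁)).exists_bound_of_continuousOn
      ((Continuous.continuousOn (by fun_prop : Continuous fun r : ℝ => Real.exp (2*r))).mul
        (huc.mono Icc_subset_Ici_self))
    set C' : ℝ := max (max N₁ (max N₂ N₃)) (3*M) + 1 with hC'_def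
    have h3M : 3*M ≤ C' := by
      have := le_max_right (max N₁ (max N₂ N₃)) (3*M); linarith
    have hN₁C' : N₁ ≤ C' := by
      have h1 := le_max_left N₁ (max N₂ N₃)
      have h2 := le_max_left (max N₁ (max N₂ N₃)) (3*M); linarith
    have hN₂C' : N₂ ≤ C' := by
      have h1 := le_max_left N₂ N₃
      have h2 := le_max_right N₁ (max N₂ N₃)
      have h3 := le_max_left (max N₁ (max N₂ N₃)) (3*M); linarith
    have hN₃C' : N₃ ≤ C' := by
      have h1 := le_max_right N₂ N₃
      have h2 := le_max_right N₁ (max N₂ N₃)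
      have h3 := le_max_left (max N₁ (max N₂ N₃)) (3*M); linarith
    have hC'pos : 0 < C' := by
      rw [hC'_def]
      have h1 := le_max_right (max N₁ (max N₂ N₃)) (3*M)
      linarith
    refine ⟨C', hC'pos, ?_⟩
    intro r hr
    rcases le_total r r₁ with hcase | hcase
    · -- compact part
      have hmem : r ∈ Icc r₀ r₁ := ⟨hr, hcase⟩
      have h₁ := hN₁ r hmem
      have h₂ := hN₂ r hmem
      have h₃ := hN₃ r hmem
      simp only [Pi.mul_apply] at h₁ h₂ h₃
      rw [Real.norm_eq_abs, abs_mul, abs_of_pos (Real.exp_pos _)] at h₁ h₂ h₃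
      have hE1 : (0:ℝ) < Real.exp (-r) := Real.exp_pos _
      have hE2 : (0:ℝ) < Real.exp (-2*r) := Real.exp_pos _
      have hc1 : Real.exp (-r) * Real.exp r = 1 := by
        rw [← Real.exp_add]; simp
      have hc2 : Real.exp (-2*r) * Real.exp (2*r) = 1 := by
        rw [← Real.exp_add]; rw [show -2*r + 2*r = 0 by ring]; exact Real.exp_zero
      refine ⟨?_, ?_, ?_⟩
      · calc |v r| = Real.exp (-r) * (Real.exp r * |v r|) := by
              rw [← mul_assoc, hc1, one_mul]
          _ ≤ Real.exp (-r) * C' := mul_le_mul_of_nonneg_left (le_trans h₁ hN₁C') hE1.le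
          _ = C' * Real.exp (-r) := mul_comm _ _
      · calc |v' r| = Real.exp (-r) * (Real.exp r * |v' r|) := by
              rw [← mul_assoc, hc1, one_mul]
          _ ≤ Real.exp (-r) * C' := mul_le_mul_of_nonneg_left (le_trans h₂ hN₂C') hE1.le
          _ = C' * Real.exp (-r) := mul_comm _ _
      · have : |v r + v' r| = |u r| := by rw [hu_def]
        rw [this]
        calc |u r| = Real.exp (-2*r) * (Real.exp (2*r) * |u r|) := by
              rw [← mul_assoc, hc2, one_mul]
          _ ≤ Real.exp (-2*r) * C' := mul_le_mul_of_nonneg_left (le_trans h₃ hN₃C') hE2.le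
          _ = C' * Real.exp (-2*r) := mul_comm _ _
    · -- tail part
      have hr0 : (0:ℝ) ≤ r := le_trans hr₁0 hcase
      have hu1 := hUbd r hcase
      have hw1 := hWbd r hcase
      have hE1 : (0:ℝ) < Real.exp (-r) := Real.exp_pos _
      have hE2 : (0:ℝ) < Real.exp (-2*r) := Real.exp_pos _
      have hc1 : Real.exp (-r) * Real.exp r = 1 := by
        rw [← Real.exp_add]; simp
      have hc2 : Real.exp (-2*r) * Real.exp (2*r) = 1 := by
        rw [← Real.exp_add]; rw [show -2*r + 2*r = 0 by ring]; exact Real.exp_zero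
      have hur : |u r| ≤ M * Real.exp (-2*r) := by
        calc |u r| = Real.exp (-2*r) * (Real.exp (2*r) * |u r|) := by
              rw [← mul_assoc, hc2, one_mul]
          _ ≤ Real.exp (-2*r) * M := mul_le_mul_of_nonneg_left hu1 hE2.le
          _ = M * Real.exp (-2*r) := mul_comm _ _
      have hwr : |w r| ≤ M * Real.exp (-r) := by
        calc |w r| = Real.exp (-r) * (Real.exp r * |w r|) := by
              rw [← mul_assoc, hc1, one_mul]
          _ ≤ Real.exp (-r) * M := mul_le_mul_of_nonneg_left hw1 hE1.le
          _ = M * Real.exp (-r) := mul_comm _ _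
      have hee : Real.exp (-2*r) ≤ Real.exp (-r) := Real.exp_le_exp.2 (by linarith)
      have hvb : |v r| ≤ |u r| + |w r| := by
        rw [hveq r]
        calc |w r - u r| ≤ |w r| + |u r| := abs_sub _ _
          _ = |u r| + |w r| := by ring
      have hv'b : |v' r| ≤ 2 * |u r| + |w r| := by
        rw [hv'eq r]
        calc |2 * u r - w r| ≤ |2 * u r| + |w r| := abs_sub _ _
          _ = 2 * |u r| + |w r| := by rw [abs_mul]; norm_num
      refine ⟨?_, ?_, ?_⟩
      · nlinarith [hvb, hur, hwr, hee, hMnn, hE1, hE2, h3M]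
      · nlinarith [hv'b, hur, hwr, hee, hMnn, hE1, hE2, h3M]
      · have : |v r + v' r| = |u r| := by rw [hu_def]
        rw [this]
        nlinarith [hur, hMnn, hE2, h3M]
end

section
/- Let n ≥ 5 be an integer and let η : ℝ → ℝ be smooth with η(0) = η'(0) = η''(0) = 0 and sup_{x∈ℝ} |η'''(x)| < ∞. Suppose u ∈ C²((0,∞)) satisfies (1−ρ²) u''(ρ) + ((n−1)/ρ − 4ρ) u'(ρ) − 2 u(ρ) + (n−3)/ρ³ · η(ρ u(ρ)) = 0 for all ρ ∈ (0,∞), and that there exist C > 0 and γ > 1/2 with |u(ρ)| ≤ C ρ^{−γ} for all ρ ≥ 1. Then the limits lim_{ρ→∞} ρ u(ρ) and lim_{ρ→∞} ρ²(u(ρ) + ρ u'(ρ)) exist in ℝ, and there is C' > 0 such that |u(ρ)| ≤ C' ρ^{−1}, |u'(ρ)| ≤ C' ρ^{−2} and |u(ρ) + ρ u'(ρ)| ≤ C' ρ^{−2} for all ρ ≥ 1. -/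
open Real Set Filter intervalIntegral MeasureTheory
open scoped ContDiff

lemma step_nonneg (f : ℝ → ℝ) (hf : Differentiable ℝ f) (hfc : Continuous (deriv f))
    (h0 : f 0 = 0) (c : ℝ) (m : ℕ) (hb : ∀ x, |deriv f x| ≤ c * |x| ^ m)
    (x : ℝ) (hx : 0 ≤ x) : |f x| ≤ c / (m + 1) * x ^ (m + 1) := by
  have hftc : f x - f 0 = ∫ t in (0:ℝ)..x, deriv f t :=
    (integral_deriv_eq_sub (fun t _ => hf t) (hfc.intervalIntegrable 0 x)).symm
  rw [h0, sub_zero] at hftc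
  have hcm : (0:ℝ) < (m:ℝ) + 1 := by positivity
  calc |f x| = |∫ t in (0:ℝ)..x, deriv f t| := by rw [hftc]
    _ ≤ ∫ t in (0:ℝ)..x, |deriv f t| := abs_integral_le_integral_abs hx
    _ ≤ ∫ t in (0:ℝ)..x, c * t ^ m := by
        apply integral_mono_on hx ((hfc.abs).intervalIntegrable 0 x)
          ((continuous_const.mul (continuous_pow m)).intervalIntegrable 0 x)
        intro t ht
        simpa [abs_of_nonneg ht.1] using hb t
    _ = c * ((x ^ (m+1) - 0 ^ (m+1)) / (m + 1)) := by
        rw [intervalIntegral.integral_const_mul, integral_pow]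
    _ = c / (m + 1) * x ^ (m + 1) := by
        rw [zero_pow (Nat.succ_ne_zero m)]
        field_simp
        ring

lemma step_all (f : ℝ → ℝ) (hf : Differentiable ℝ f) (hfc : Continuous (deriv f))
    (h0 : f 0 = 0) (c : ℝ) (m : ℕ) (hb : ∀ x, |deriv f x| ≤ c * |x| ^ m)
    (x : ℝ) : |f x| ≤ c / (m + 1) * |x| ^ (m + 1) := by
  rcases le_total 0 x with hx | hx
  · rw [abs_of_nonneg hx]; exact step_nonneg f hf hfc h0 c m hb x hx
  · set g : ℝ → ℝ := fun t => f (-t) with hg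
    have hgd : Differentiable ℝ g := hf.comp differentiable_neg
    have hgder : ∀ t, deriv g t = -deriv f (-t) := fun t => deriv_comp_neg f t
    have hgc : Continuous (deriv g) := by
      have : Continuous fun t => -deriv f (-t) := (hfc.comp continuous_neg).neg
      exact (funext hgder) ▸ this
    have hgb : ∀ t, |deriv g t| ≤ c * |t| ^ m := by
      intro t; rw [hgder, abs_neg]
      simpa [abs_neg] using hb (-t)
    have := step_nonneg g hgd hgc (show g 0 = 0 by simp [hg, h0]) c m hgb (-x) (by linarith)
    rw [abs_of_nonpos hx]
    simpa [hg] using this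

lemma cubic_bound (η : ℝ → ℝ) (hη : ContDiff ℝ (⊤ : ℕ∞) η)
    (h0 : η 0 = 0) (h1 : deriv η 0 = 0) (h2 : deriv (deriv η) 0 = 0)
    (B : ℝ) (hB : ∀ x : ℝ, |iteratedDeriv 3 η x| ≤ B) :
    ∀ x, |η x| ≤ B / 6 * |x| ^ 3 := by
  have h1top : (1 : WithTop ℕ∞) ≤ ∞ := by exact_mod_cast (le_top : (1:ℕ∞) ≤ ⊤)
  have hη' : ContDiff ℝ ∞ η := hη
  have hd1 : ContDiff ℝ ∞ (deriv η) := (contDiff_infty_iff_deriv.mp hη').2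
  have hd2 : ContDiff ℝ ∞ (deriv (deriv η)) := (contDiff_infty_iff_deriv.mp hd1).2
  have h3 : ∀ x, deriv (deriv (deriv η)) x = iteratedDeriv 3 η x := by
    intro x
    simp [iteratedDeriv_succ, iteratedDeriv_zero]
  have hb0 : ∀ x, |deriv (deriv (deriv η)) x| ≤ B * |x| ^ 0 := by
    intro x; rw [h3]; simpa using hB x
  have s1 :=
    step_all _ (hd2.differentiable (by simp)) ((contDiff_infty_iff_deriv.mp hd2).2.continuous) h2 B 0 hb0
  have s2 :=
    step_all _ (hd1.differentiable (by simp)) (hd2.continuous) h1 _ 1 s1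
  have s3 :=
    step_all _ (hη'.differentiable (by simp)) (hd1.continuous) h0 _ 2 s2
  intro x
  calc |η x| ≤ _ := s3 x
    _ = B / 6 * |x| ^ 3 := by push_cast; ring_nf

lemma g_hasDeriv (ν : ℝ) (η u : ℝ → ℝ)
    (hu1 : ∀ ρ : ℝ, 0 < ρ → HasDerivAt u (deriv u ρ) ρ)
    (hu2 : ∀ ρ : ℝ, 0 < ρ → HasDerivAt (deriv u) (deriv (deriv u) ρ) ρ)
    (hode : ∀ ρ : ℝ, 0 < ρ →
      (1 - ρ^2) * deriv (deriv u) ρ + ((ν - 1)/ρ - 4*ρ) * deriv u ρ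
        - 2 * u ρ + (ν - 3)/ρ^3 * η (ρ * u ρ) = 0)
    (ρ : ℝ) (hρ : 1 < ρ) :
    HasDerivAt (fun s => s^2*(u s + s * deriv u s))
      ((ν-5)/(ρ*(ρ^2-1)) * (ρ^2*(u ρ + ρ * deriv u ρ))
        + (ν-3)*(η (ρ * u ρ) - ρ * u ρ)/(ρ^2-1)) ρ := by
  have hρ0 : (0:ℝ) < ρ := by linarith
  have h1 : HasDerivAt (fun s => s^2*(u s + s * deriv u s))
      ((2*ρ^1)*(u ρ + ρ * deriv u ρ)
        + ρ^2*(deriv u ρ + (1 * deriv u ρ + ρ * deriv (deriv u) ρ))) ρ := by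
    exact (hasDerivAt_pow 2 ρ).mul ((hu1 ρ hρ0).add ((hasDerivAt_id ρ).mul (hu2 ρ hρ0)))
  convert h1 using 1
  have hne : ρ ≠ 0 := ne_of_gt hρ0
  have hd : ρ^2 - 1 ≠ 0 := by nlinarith
  have ho := hode ρ hρ0
  field_simp at ho ⊢
  linear_combination ho

lemma phi_hasDeriv (ν : ℝ) (ρ : ℝ) (hρ : 1 < ρ) :
    HasDerivAt (fun s : ℝ => (1 - (s^2)⁻¹) ^ ((5-ν)/2))
      (-((ν-5)/(ρ*(ρ^2-1))) * ((1 - (ρ^2)⁻¹) ^ ((5-ν)/2))) ρ := by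
  have hρ0 : (0:ℝ) < ρ := by linarith
  have hb : (0:ℝ) < 1 - (ρ^2)⁻¹ := by
    have h1 : (1:ℝ) < ρ^2 := by nlinarith
    have : (ρ^2)⁻¹ < 1 := by
      rw [inv_lt_one_iff₀]; right; exact h1
    linarith
  have hbase : HasDerivAt (fun s : ℝ => 1 - (s^2)⁻¹) (-(-(2*ρ^1)/(ρ^2)^2)) ρ := by
    exact ((hasDerivAt_pow 2 ρ).inv (by positivity)).const_sub 1
  have h := hbase.rpow_const (p := (5-ν)/2) (Or.inl (ne_of_gt hb))
  convert h using 1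
  rw [Real.rpow_sub_one (ne_of_gt hb)]
  have hd : ρ^2 - 1 ≠ 0 := by nlinarith
  have hne : ρ ≠ 0 := ne_of_gt hρ0
  field_simp
  ring

lemma phi_bounds (ν : ℝ) (hν : 5 ≤ ν) (ρ : ℝ) (hρ : 2 ≤ ρ) :
    1 ≤ (1 - (ρ^2)⁻¹) ^ ((5-ν)/2) ∧
      (1 - (ρ^2)⁻¹) ^ ((5-ν)/2) ≤ (3/4 : ℝ) ^ ((5-ν)/2) := by
  have hρ0 : (0:ℝ) < ρ := by linarith
  have h4 : (4:ℝ) ≤ ρ^2 := by nlinarith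
  have hinv : (ρ^2)⁻¹ ≤ 1/4 := by
    rw [inv_le_comm₀ (by positivity) (by norm_num)]; linarith
  have hb0 : (3/4:ℝ) ≤ 1 - (ρ^2)⁻¹ := by linarith
  have hb1 : 1 - (ρ^2)⁻¹ ≤ 1 := by
    have : 0 < (ρ^2)⁻¹ := by positivity
    linarith
  have he : (5-ν)/2 ≤ 0 := by linarith
  constructor
  · calc (1:ℝ) = (1:ℝ) ^ ((5-ν)/2) := (Real.one_rpow _).symm
      _ ≤ (1 - (ρ^2)⁻¹) ^ ((5-ν)/2) :=
        Real.rpow_le_rpow_of_nonpos (by linarith) hb1 he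
  · exact Real.rpow_le_rpow_of_nonpos (by norm_num) hb0 he

lemma phi_tendsto (ν : ℝ) :
    Tendsto (fun ρ : ℝ => (1 - (ρ^2)⁻¹) ^ ((5-ν)/2)) atTop (nhds 1) := by
  have hbase : Tendsto (fun ρ : ℝ => 1 - (ρ^2)⁻¹) atTop (nhds 1) := by
    have : Tendsto (fun ρ : ℝ => (ρ^2)⁻¹) atTop (nhds 0) :=
      (tendsto_pow_atTop (by norm_num)).inv_tendsto_atTop
    simpa using (tendsto_const_nhds (x := (1:ℝ))).sub this
  have hc : ContinuousAt (fun x : ℝ => x ^ ((5-ν)/2)) 1 :=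
    Real.continuousAt_rpow_const 1 _ (Or.inl one_ne_zero)
  have := hc.tendsto.comp hbase
  simpa [Real.one_rpow, Function.comp_def] using this

lemma abs_integral_le_rpow (F : ℝ → ℝ) (ρ M r : ℝ) (h2ρ : 2 ≤ ρ) (hr : r ≠ -1)
    (hF : ContinuousOn F (Icc 2 ρ)) (hM : 0 ≤ M)
    (hb : ∀ s ∈ Icc (2:ℝ) ρ, |F s| ≤ M * s ^ r) :
    |∫ s in (2:ℝ)..ρ, F s| ≤ M * ((ρ^(r+1) - 2^(r+1))/(r+1)) := by
  have hFi : IntervalIntegrable F volume 2 ρ := by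
    apply ContinuousOn.intervalIntegrable
    rwa [uIcc_of_le h2ρ]
  have hGc : ContinuousOn (fun s : ℝ => M * s ^ r) (Icc 2 ρ) := by
    apply ContinuousOn.mul continuousOn_const
    intro s hs
    exact (Real.continuousAt_rpow_const s r (Or.inl (by linarith [hs.1] : s ≠ 0))).continuousWithinAt
  have hGi : IntervalIntegrable (fun s : ℝ => M * s ^ r) volume 2 ρ := by
    apply ContinuousOn.intervalIntegrable
    rwa [uIcc_of_le h2ρ]
  calc |∫ s in (2:ℝ)..ρ, F s| ≤ ∫ s in (2:ℝ)..ρ, |F s| :=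
        intervalIntegral.abs_integral_le_integral_abs h2ρ
    _ ≤ ∫ s in (2:ℝ)..ρ, M * s ^ r := by
        apply intervalIntegral.integral_mono_on h2ρ hFi.abs hGi hb
    _ = M * ∫ s in (2:ℝ)..ρ, s ^ r := intervalIntegral.integral_const_mul _ _
    _ = M * ((ρ^(r+1) - 2^(r+1))/(r+1)) := by
        rw [integral_rpow (Or.inr ⟨hr, by rw [uIcc_of_le h2ρ]; intro h; exact absurd h.1 (by norm_num)⟩)]

lemma key_bound (ν B : ℝ) (hν : 5 ≤ ν) (hB0 : 0 ≤ B) (η u : ℝ → ℝ)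
    (hηb : ∀ x, |η x| ≤ B/6 * |x|^3)
    (D κ : ℝ) (hD : 0 ≤ D) (hκa : 1/2 < κ) (hκb : κ ≤ 1)
    (hbnd : ∀ ρ ≥ (1:ℝ), |u ρ| ≤ D * ρ^(-κ)) :
    ∀ ρ ≥ (2:ℝ), |((1 - (ρ^2)⁻¹) ^ ((5-ν)/2)) * ((ν-3)*(η (ρ * u ρ) - ρ * u ρ)/(ρ^2-1))|
      ≤ ((3/4:ℝ)^((5-ν)/2) * ((ν-3) * (B/6*D^3 + D) * (4/3))) * ρ^(1-3*κ) := by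
  intro ρ hρ2
  have hρ1 : (1:ℝ) ≤ ρ := by linarith
  have hρ0 : (0:ℝ) < ρ := by linarith
  have hν3 : (0:ℝ) < ν - 3 := by linarith
  have hden : (0:ℝ) < ρ^2 - 1 := by nlinarith
  have hw : |ρ * u ρ| ≤ D * ρ^(1-κ) := by
    rw [abs_mul, abs_of_nonneg hρ0.le]
    calc ρ * |u ρ| ≤ ρ * (D * ρ^(-κ)) := mul_le_mul_of_nonneg_left (hbnd ρ hρ1) hρ0.le
      _ = D * ρ^(1-κ) := by
          rw [show (1-κ) = 1 + (-κ) by ring, Real.rpow_add hρ0, Real.rpow_one]; ring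
  have hw3 : |ρ * u ρ|^3 ≤ D^3 * ρ^(3-3*κ) := by
    calc |ρ * u ρ|^3 ≤ (D * ρ^(1-κ))^3 := pow_le_pow_left₀ (abs_nonneg _) hw 3
      _ = D^3 * ρ^(3-3*κ) := by
          rw [mul_pow, ← Real.rpow_natCast (ρ^(1-κ)) 3, ← Real.rpow_mul hρ0.le,
            show ((1-κ)*((3:ℕ):ℝ)) = 3-3*κ by push_cast; ring]
  have hηw : |η (ρ * u ρ) - ρ * u ρ| ≤ (B/6*D^3 + D) * ρ^(3-3*κ) := by
    have e1 : ρ^(1-κ) ≤ ρ^(3-3*κ) := Real.rpow_le_rpow_of_exponent_le hρ1 (by linarith)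
    calc |η (ρ * u ρ) - ρ * u ρ| ≤ |η (ρ * u ρ)| + |ρ * u ρ| := abs_sub _ _
      _ ≤ B/6 * |ρ * u ρ|^3 + D * ρ^(1-κ) := add_le_add (hηb _) hw
      _ ≤ B/6 * (D^3 * ρ^(3-3*κ)) + D * ρ^(3-3*κ) :=
          add_le_add (mul_le_mul_of_nonneg_left hw3 (by positivity))
            (mul_le_mul_of_nonneg_left e1 hD)
      _ = (B/6*D^3 + D) * ρ^(3-3*κ) := by ring
  have hinvd : (ρ^2 - 1)⁻¹ ≤ 4/3 * ρ^((-2):ℝ) := by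
    have h34 : (3/4)*ρ^2 ≤ ρ^2 - 1 := by nlinarith
    have := inv_anti₀ (by positivity : (0:ℝ) < (3/4)*ρ^2) h34
    calc (ρ^2 - 1)⁻¹ ≤ ((3/4)*ρ^2)⁻¹ := this
      _ = 4/3 * (ρ^2)⁻¹ := by rw [mul_inv]; norm_num
      _ = 4/3 * ρ^((-2):ℝ) := by
          rw [Real.rpow_neg hρ0.le, Real.rpow_two]
  have hphi : |(1 - (ρ^2)⁻¹) ^ ((5-ν)/2)| ≤ (3/4:ℝ)^((5-ν)/2) := by
    have h4 : (4:ℝ) ≤ ρ^2 := by nlinarith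
    have hinv : (ρ^2)⁻¹ ≤ 1/4 := by
      rw [inv_le_comm₀ (by positivity) (by norm_num)]; linarith
    have hb0 : (3/4:ℝ) ≤ 1 - (ρ^2)⁻¹ := by linarith
    rw [abs_of_nonneg (Real.rpow_nonneg (by linarith) _)]
    exact Real.rpow_le_rpow_of_nonpos (by norm_num) hb0 (by linarith)
  have hf : |(ν-3)*(η (ρ * u ρ) - ρ * u ρ)/(ρ^2-1)|
      ≤ (ν-3) * (B/6*D^3 + D) * (4/3) * ρ^(1-3*κ) := by
    rw [abs_div, abs_of_pos hden, abs_mul, abs_of_pos hν3, div_eq_mul_inv]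
    calc (ν-3) * |η (ρ * u ρ) - ρ * u ρ| * (ρ^2-1)⁻¹
        ≤ (ν-3) * ((B/6*D^3 + D) * ρ^(3-3*κ)) * (4/3 * ρ^((-2):ℝ)) := by
          apply mul_le_mul
          · exact mul_le_mul_of_nonneg_left hηw hν3.le
          · exact hinvd
          · positivity
          · positivity
      _ = (ν-3) * (B/6*D^3 + D) * (4/3) * (ρ^(3-3*κ) * ρ^((-2):ℝ)) := by ring
      _ = (ν-3) * (B/6*D^3 + D) * (4/3) * ρ^(1-3*κ) := by
          rw [← Real.rpow_add hρ0, show (3-3*κ + (-2:ℝ)) = 1-3*κ by ring]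
  calc |((1 - (ρ^2)⁻¹) ^ ((5-ν)/2)) * ((ν-3)*(η (ρ * u ρ) - ρ * u ρ)/(ρ^2-1))|
      = |(1 - (ρ^2)⁻¹) ^ ((5-ν)/2)| * |(ν-3)*(η (ρ * u ρ) - ρ * u ρ)/(ρ^2-1)| := abs_mul _ _
    _ ≤ (3/4:ℝ)^((5-ν)/2) * ((ν-3) * (B/6*D^3 + D) * (4/3) * ρ^(1-3*κ)) := by
        apply mul_le_mul hphi hf (abs_nonneg _) (by positivity)
    _ = ((3/4:ℝ)^((5-ν)/2) * ((ν-3) * (B/6*D^3 + D) * (4/3))) * ρ^(1-3*κ) := by ring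

set_option maxHeartbeats 2000000 in
/-- ODE content of Proposition 3.9: a priori decay of rate γ > 1/2 at
infinity for a solution u of the n-dimensional self-similar profile equation upgrades to
the sharp decay rates ρ⁻¹ for u and ρ⁻² for u' and u + ρu', with convergence of ρ u(ρ)
and ρ²(u(ρ) + ρ u'(ρ)) at infinity. -/
theorem stmt_12 (n : ℕ) (hn : 5 ≤ n)
    (η : ℝ → ℝ) (hη : ContDiff ℝ (⊤ : ℕ∞) η)
    (h0 : η 0 = 0) (h1 : deriv η 0 = 0) (h2 : deriv (deriv η) 0 = 0)
    (B : ℝ) (hB : ∀ x : ℝ, |iteratedDeriv 3 η x| ≤ B)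
    (u : ℝ → ℝ) (hu : ContDiffOn ℝ 2 u (Ioi 0))
    (hode : ∀ ρ ∈ Ioi (0:ℝ),
      (1 - ρ^2) * deriv (deriv u) ρ + (((n:ℝ) - 1)/ρ - 4*ρ) * deriv u ρ
        - 2 * u ρ + ((n:ℝ) - 3)/ρ^3 * η (ρ * u ρ) = 0)
    (C γ : ℝ) (hC : 0 < C) (hγ : 1/2 < γ)
    (hdecay : ∀ ρ ≥ (1:ℝ), |u ρ| ≤ C * ρ ^ (-γ)) :
    (∃ L₁ : ℝ, Tendsto (fun ρ => ρ * u ρ) atTop (nhds L₁)) ∧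
    (∃ L₂ : ℝ, Tendsto (fun ρ => ρ^2 * (u ρ + ρ * deriv u ρ)) atTop (nhds L₂)) ∧
    ∃ C' > (0:ℝ), ∀ ρ ≥ (1:ℝ),
      |u ρ| ≤ C' * ρ⁻¹ ∧ |deriv u ρ| ≤ C' * (ρ^2)⁻¹ ∧
      |u ρ + ρ * deriv u ρ| ≤ C' * (ρ^2)⁻¹ := by
  have hν : (5:ℝ) ≤ (n:ℝ) := by exact_mod_cast hn
  set ν : ℝ := (n:ℝ) with hνdef
  have hB0 : (0:ℝ) ≤ B := le_trans (abs_nonneg _) (hB 0)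
  have hηb : ∀ x, |η x| ≤ B/6 * |x|^3 := cubic_bound η hη h0 h1 h2 B hB
  -- regularity of u
  have hud : DifferentiableOn ℝ u (Ioi 0) := hu.differentiableOn (by norm_num)
  have hu1 : ∀ ρ : ℝ, 0 < ρ → HasDerivAt u (deriv u ρ) ρ := fun ρ hρ =>
    ((hud ρ (mem_Ioi.mpr hρ)).differentiableAt (Ioi_mem_nhds hρ)).hasDerivAt
  have hu'c : ContDiffOn ℝ 1 (deriv u) (Ioi 0) := hu.deriv_of_isOpen isOpen_Ioi (by norm_num)
  have hu2 : ∀ ρ : ℝ, 0 < ρ → HasDerivAt (deriv u) (deriv (deriv u) ρ) ρ := fun ρ hρ =>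
    (((hu'c.differentiableOn one_ne_zero) ρ (mem_Ioi.mpr hρ)).differentiableAt
      (Ioi_mem_nhds hρ)).hasDerivAt
  have hucont : ContinuousOn u (Ioi 0) := hud.continuousOn
  have hu'cont : ContinuousOn (deriv u) (Ioi 0) := hu'c.continuousOn
  have hode' : ∀ ρ : ℝ, 0 < ρ →
      (1 - ρ^2) * deriv (deriv u) ρ + ((ν - 1)/ρ - 4*ρ) * deriv u ρ
        - 2 * u ρ + (ν - 3)/ρ^3 * η (ρ * u ρ) = 0 := fun ρ hρ => hode ρ (mem_Ioi.mpr hρ)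
  set φ : ℝ → ℝ := fun s => (1 - (s^2)⁻¹) ^ ((5-ν)/2) with hφdef
  set g : ℝ → ℝ := fun s => s^2 * (u s + s * deriv u s) with hgdef
  set w : ℝ → ℝ := fun s => s * u s with hwdef
  set f : ℝ → ℝ := fun s => (ν-3)*(η (s * u s) - s * u s)/(s^2-1) with hfdef
  have hΦpos : (0:ℝ) < (3/4:ℝ)^((5-ν)/2) := Real.rpow_pos_of_pos (by norm_num) _
  have hgd : ∀ ρ : ℝ, 1 < ρ → HasDerivAt g ((ν-5)/(ρ*(ρ^2-1)) * g ρ + f ρ) ρ :=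
    fun ρ hρ => g_hasDeriv ν η u hu1 hu2 hode' ρ hρ
  have hφd : ∀ ρ : ℝ, 1 < ρ → HasDerivAt φ (-((ν-5)/(ρ*(ρ^2-1))) * φ ρ) ρ :=
    fun ρ hρ => phi_hasDeriv ν ρ hρ
  have hhd : ∀ ρ : ℝ, 1 < ρ → HasDerivAt (fun s => g s * φ s) (φ ρ * f ρ) ρ := by
    intro ρ hρ
    have h := (hgd ρ hρ).mul (hφd ρ hρ)
    exact h.congr_deriv (by ring)
  -- continuity
  have hsub10 : Ioi (1:ℝ) ⊆ Ioi 0 := fun x hx => mem_Ioi.mpr (lt_trans one_pos hx)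
  have hwc : ContinuousOn (fun s : ℝ => s * u s) (Ioi 1) :=
    continuousOn_id.mul (hucont.mono hsub10)
  have hfc : ContinuousOn f (Ioi 1) := by
    apply ContinuousOn.div
    · exact continuousOn_const.mul ((hη.continuous.comp_continuousOn hwc).sub hwc)
    · exact (continuousOn_pow 2).sub continuousOn_const
    · intro x hx
      have hx1 : (1:ℝ) < x := hx
      nlinarith
  have hφc : ContinuousOn φ (Ioi 1) := fun x hx => ((hφd x hx).continuousAt).continuousWithinAt
  have hφfc : ContinuousOn (fun s => φ s * f s) (Ioi 1) := hφc.mul hfc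
  have hIccsub : ∀ ρ : ℝ, 2 ≤ ρ → Icc (2:ℝ) ρ ⊆ Ioi 1 :=
    fun ρ hρ x hx => lt_of_lt_of_le one_lt_two hx.1
  have FTCh : ∀ ρ : ℝ, 2 ≤ ρ → (∫ s in (2:ℝ)..ρ, φ s * f s) = g ρ * φ ρ - g 2 * φ 2 := by
    intro ρ hρ
    apply intervalIntegral.integral_eq_sub_of_hasDerivAt
    · intro x hx
      rw [uIcc_of_le hρ] at hx
      exact hhd x (lt_of_lt_of_le one_lt_two hx.1)
    · apply ContinuousOn.intervalIntegrable
      rw [uIcc_of_le hρ]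
      exact hφfc.mono (hIccsub ρ hρ)
  have hWd : ∀ x : ℝ, 0 < x → HasDerivAt w (u x + x * deriv u x) x := by
    intro x hx
    have h := (hasDerivAt_id x).mul (hu1 x hx)
    exact h.congr_deriv (by simp only [id_eq]; ring)
  have hWc : ContinuousOn (fun s : ℝ => u s + s * deriv u s) (Ioi 0) :=
    hucont.add (continuousOn_id.mul hu'cont)
  have FTCw : ∀ ρ : ℝ, 2 ≤ ρ → (∫ s in (2:ℝ)..ρ, (u s + s * deriv u s)) = w ρ - w 2 := by
    intro ρ hρ
    apply intervalIntegral.integral_eq_sub_of_hasDerivAt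
    · intro x hx
      rw [uIcc_of_le hρ] at hx
      exact hWd x (lt_of_lt_of_le (by norm_num) hx.1)
    · apply ContinuousOn.intervalIntegrable
      rw [uIcc_of_le hρ]
      exact hWc.mono (fun x hx => lt_of_lt_of_le (by norm_num) hx.1)
  have hφ1 : ∀ ρ ≥ (2:ℝ), 1 ≤ φ ρ := fun ρ hρ => (phi_bounds ν hν ρ hρ).1
  -- relation |g s| = s^2 |u s + s u' s|
  have habsg : ∀ s : ℝ, 0 < s → |g s| = s^2 * |u s + s * deriv u s| := by
    intro s hs
    rw [hgdef]
    simp only []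
    rw [abs_mul, abs_of_nonneg (by positivity : (0:ℝ) ≤ s^2)]
  -- a generic consequence: bound on g ⊔ FTC gives bound on gφ
  have hgle : ∀ ρ ≥ (2:ℝ), |g ρ| ≤ |g 2 * φ 2| + |∫ s in (2:ℝ)..ρ, φ s * f s| := by
    intro ρ hρ
    have h1 : |g ρ| ≤ |g ρ * φ ρ| := by
      have h2 : 1 ≤ φ ρ := hφ1 ρ hρ
      calc |g ρ| = |g ρ| * 1 := (mul_one _).symm
        _ ≤ |g ρ| * |φ ρ| := by
            apply mul_le_mul_of_nonneg_left _ (abs_nonneg _)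
            rw [abs_of_nonneg (show (0:ℝ) ≤ φ ρ by linarith)]
            exact h2
        _ = |g ρ * φ ρ| := (abs_mul _ _).symm
    have h4 : |g ρ * φ ρ| ≤ |g 2 * φ 2| + |g ρ * φ ρ - g 2 * φ 2| := by
      have := abs_add_le (g 2 * φ 2) (g ρ * φ ρ - g 2 * φ 2)
      simpa using this
    rw [← FTCh ρ hρ] at h4
    exact h1.trans h4
  -- Stage 1
  have hγ₀a : 1/2 < min γ (5/8:ℝ) := lt_min hγ (by norm_num)
  set γ₀ : ℝ := min γ (5/8) with hγ₀def
  have hγ₀b : γ₀ ≤ 5/8 := min_le_right _ _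
  have hγ₀γ : γ₀ ≤ γ := min_le_left _ _
  have hdec0 : ∀ ρ ≥ (1:ℝ), |u ρ| ≤ C * ρ^(-γ₀) := by
    intro ρ hρ
    refine (hdecay ρ hρ).trans (mul_le_mul_of_nonneg_left ?_ hC.le)
    exact Real.rpow_le_rpow_of_exponent_le hρ (by linarith)
  set M₁ : ℝ := (3/4:ℝ)^((5-ν)/2) * ((ν-3) * (B/6*C^3 + C) * (4/3)) with hM₁def
  have hM₁0 : 0 ≤ M₁ :=
    mul_nonneg hΦpos.le (mul_nonneg (mul_nonneg (by linarith) (by positivity)) (by norm_num))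
  have hkey1 : ∀ ρ ≥ (2:ℝ), |φ ρ * f ρ| ≤ M₁ * ρ^(1-3*γ₀) :=
    key_bound ν B hν hB0 η u hηb C γ₀ hC.le hγ₀a (by linarith) hdec0
  have hδ1 : (0:ℝ) < 1-3*γ₀+1 := by linarith
  have hδ2 : 1-3*γ₀+1 < 1 := by linarith
  have hr₁ : (1-3*γ₀) ≠ -1 := by intro hq; linarith
  have hInt1 : ∀ ρ ≥ (2:ℝ), |∫ s in (2:ℝ)..ρ, φ s * f s|
      ≤ M₁ * ((ρ^(1-3*γ₀+1) - 2^(1-3*γ₀+1))/(1-3*γ₀+1)) := by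
    intro ρ hρ
    exact abs_integral_le_rpow _ ρ M₁ _ hρ hr₁ (hφfc.mono (hIccsub ρ hρ)) hM₁0
      (fun s hs => hkey1 s hs.1)
  set M₃ : ℝ := |g 2 * φ 2| + M₁ / (1-3*γ₀+1) with hM₃def
  have hM₃0 : 0 ≤ M₃ := add_nonneg (abs_nonneg _) (div_nonneg hM₁0 hδ1.le)
  have hg1 : ∀ ρ ≥ (2:ℝ), |g ρ| ≤ M₃ * ρ^(1-3*γ₀+1) := by
    intro ρ hρ
    have hρ1 : (1:ℝ) ≤ ρ := by linarith
    have h2pos : (0:ℝ) < (2:ℝ)^(1-3*γ₀+1) := Real.rpow_pos_of_pos (by norm_num) _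
    have hρδ : (1:ℝ) ≤ ρ^(1-3*γ₀+1) := by
      calc (1:ℝ) = ρ ^ (0:ℝ) := (Real.rpow_zero ρ).symm
        _ ≤ ρ^(1-3*γ₀+1) := Real.rpow_le_rpow_of_exponent_le hρ1 hδ1.le
    have h5 := (hgle ρ hρ).trans (add_le_add le_rfl (hInt1 ρ hρ))
    have h6 : M₁ * ((ρ^(1-3*γ₀+1) - 2^(1-3*γ₀+1))/(1-3*γ₀+1))
        ≤ (M₁/(1-3*γ₀+1)) * ρ^(1-3*γ₀+1) := by
      have e : (M₁/(1-3*γ₀+1)) * ρ^(1-3*γ₀+1)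
          - M₁ * ((ρ^(1-3*γ₀+1) - 2^(1-3*γ₀+1))/(1-3*γ₀+1))
          = (M₁ * 2^(1-3*γ₀+1))/(1-3*γ₀+1) := by
        field_simp
        ring
      have hpos : 0 ≤ (M₁ * 2^(1-3*γ₀+1))/(1-3*γ₀+1) :=
        div_nonneg (mul_nonneg hM₁0 h2pos.le) hδ1.le
      linarith
    have h7 : |g 2 * φ 2| ≤ |g 2 * φ 2| * ρ^(1-3*γ₀+1) :=
      le_mul_of_one_le_right (abs_nonneg _) hρδ
    calc |g ρ| ≤ |g 2 * φ 2| + M₁ * ((ρ^(1-3*γ₀+1) - 2^(1-3*γ₀+1))/(1-3*γ₀+1)) := h5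
      _ ≤ |g 2 * φ 2| * ρ^(1-3*γ₀+1) + (M₁/(1-3*γ₀+1)) * ρ^(1-3*γ₀+1) := by linarith
      _ = M₃ * ρ^(1-3*γ₀+1) := by rw [hM₃def]; ring
  have hWb1 : ∀ s : ℝ, 2 ≤ s → |u s + s * deriv u s| ≤ M₃ * s^(1-3*γ₀+1-2) := by
    intro s hs
    have hs0 : (0:ℝ) < s := by linarith
    have hs2 : (0:ℝ) < s^2 := by positivity
    have e1 : |u s + s * deriv u s| = |g s| / s^2 := by
      rw [habsg s hs0]; field_simp
    have e2 : M₃ * s^(1-3*γ₀+1-2) = (M₃ * s^(1-3*γ₀+1)) / s^2 := by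
      rw [Real.rpow_sub hs0, Real.rpow_two, mul_div_assoc]
    rw [e1, e2]
    gcongr
    exact hg1 s hs
  have hr₂ : (1-3*γ₀+1-2) ≠ -1 := by intro hq; linarith
  have hwInt : ∀ ρ ≥ (2:ℝ), |∫ s in (2:ℝ)..ρ, (u s + s * deriv u s)|
      ≤ M₃ * ((ρ^(1-3*γ₀+1-2+1) - 2^(1-3*γ₀+1-2+1))/(1-3*γ₀+1-2+1)) := by
    intro ρ hρ
    exact abs_integral_le_rpow _ ρ M₃ _ hρ hr₂
      (hWc.mono (fun x hx => mem_Ioi.mpr (lt_trans (by norm_num) (hIccsub ρ hρ hx))))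
      hM₃0 (fun s hs => hWb1 s hs.1)
  set cw : ℝ := |w 2| + M₃ * ((2:ℝ)^(1-3*γ₀+1-2+1)/(-(1-3*γ₀+1-2+1))) with hcwdef
  have hwbound : ∀ ρ ≥ (2:ℝ), |w ρ| ≤ cw := by
    intro ρ hρ
    have hiw := hwInt ρ hρ
    have h8 : |w ρ| ≤ |w 2| + |∫ s in (2:ℝ)..ρ, (u s + s * deriv u s)| := by
      calc |w ρ| = |w 2 + (w ρ - w 2)| := by ring_nf
        _ ≤ |w 2| + |w ρ - w 2| := abs_add_le _ _
        _ = |w 2| + |∫ s in (2:ℝ)..ρ, (u s + s * deriv u s)| := by rw [FTCw ρ hρ]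
    refine h8.trans ?_
    rw [hcwdef]
    have he : 1-3*γ₀+1-2+1 < 0 := by linarith
    have hne : (1-3*γ₀+1-2+1) ≠ 0 := by linarith
    have hρe : 0 < ρ^(1-3*γ₀+1-2+1) := Real.rpow_pos_of_pos (by linarith) _
    have h2e : 0 < (2:ℝ)^(1-3*γ₀+1-2+1) := Real.rpow_pos_of_pos (by norm_num) _
    have eq1 : (ρ^(1-3*γ₀+1-2+1) - 2^(1-3*γ₀+1-2+1))/(1-3*γ₀+1-2+1)
        = ((2:ℝ)^(1-3*γ₀+1-2+1) - ρ^(1-3*γ₀+1-2+1))/(-(1-3*γ₀+1-2+1)) := by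
      rw [div_neg, ← neg_div, neg_sub]
    have e9 : (ρ^(1-3*γ₀+1-2+1) - 2^(1-3*γ₀+1-2+1))/(1-3*γ₀+1-2+1)
        ≤ (2:ℝ)^(1-3*γ₀+1-2+1)/(-(1-3*γ₀+1-2+1)) := by
      rw [eq1]
      gcongr
      · linarith
      · linarith
    exact add_le_add le_rfl (hiw.trans (mul_le_mul_of_nonneg_left e9 hM₃0))
  -- compact piece on [1,2]
  have hIccsub01 : Icc (1:ℝ) 2 ⊆ Ioi 0 := fun x hx => lt_of_lt_of_le one_pos hx.1
  obtain ⟨c1, hc1⟩ := (isCompact_Icc : IsCompact (Icc (1:ℝ) 2)).exists_bound_of_continuousOn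
    (hucont.mono hIccsub01)
  obtain ⟨c2, hc2⟩ := (isCompact_Icc : IsCompact (Icc (1:ℝ) 2)).exists_bound_of_continuousOn
    (hu'cont.mono hIccsub01)
  set c₅ : ℝ := max (max c1 c2) 0 with hc₅def
  have hc₅0 : 0 ≤ c₅ := le_max_right _ _
  have hc₅u : ∀ x ∈ Icc (1:ℝ) 2, |u x| ≤ c₅ := by
    intro x hx
    have h := hc1 x hx
    rw [Real.norm_eq_abs] at h
    exact h.trans ((le_max_left c1 c2).trans (le_max_left _ _))
  have hc₅u' : ∀ x ∈ Icc (1:ℝ) 2, |deriv u x| ≤ c₅ := by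
    intro x hx
    have h := hc2 x hx
    rw [Real.norm_eq_abs] at h
    exact h.trans ((le_max_right c1 c2).trans (le_max_left _ _))
  set C₁ : ℝ := max cw (2*c₅) with hC₁def
  have hwball : ∀ ρ ≥ (1:ℝ), |w ρ| ≤ C₁ := by
    intro ρ hρ
    rcases le_total 2 ρ with h | h
    · exact (hwbound ρ h).trans (le_max_left _ _)
    · have hρ0 : (0:ℝ) < ρ := by linarith
      have e : |w ρ| = ρ * |u ρ| := by
        show |ρ * u ρ| = ρ * |u ρ|
        rw [abs_mul, abs_of_pos hρ0]
      have h10 := hc₅u ρ ⟨hρ, h⟩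
      calc |w ρ| = ρ * |u ρ| := e
        _ ≤ 2 * c₅ := by nlinarith [abs_nonneg (u ρ)]
        _ ≤ C₁ := le_max_right _ _
  have hC₁0 : 0 ≤ C₁ := le_trans (by linarith) (le_max_right cw (2*c₅))
  have hdec1 : ∀ ρ ≥ (1:ℝ), |u ρ| ≤ C₁ * ρ^(-(1:ℝ)) := by
    intro ρ hρ
    have hρ0 : (0:ℝ) < ρ := by linarith
    rw [Real.rpow_neg_one]
    have e : |u ρ| = |w ρ| * ρ⁻¹ := by
      show |u ρ| = |ρ * u ρ| * ρ⁻¹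
      rw [abs_mul, abs_of_pos hρ0]
      field_simp
    rw [e]
    exact mul_le_mul_of_nonneg_right (hwball ρ hρ) (by positivity)
  -- Stage 2
  set M₄ : ℝ := (3/4:ℝ)^((5-ν)/2) * ((ν-3) * (B/6*C₁^3 + C₁) * (4/3)) with hM₄def
  have hM₄0 : 0 ≤ M₄ :=
    mul_nonneg hΦpos.le (mul_nonneg (mul_nonneg (by linarith) (by positivity)) (by norm_num))
  have hkey2 : ∀ ρ ≥ (2:ℝ), |φ ρ * f ρ| ≤ M₄ * ρ^(-2:ℝ) := by
    intro ρ hρ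
    have h := key_bound ν B hν hB0 η u hηb C₁ 1 hC₁0 (by norm_num) le_rfl hdec1 ρ hρ
    rwa [show (1-3*(1:ℝ)) = (-2:ℝ) by norm_num] at h
  have hIntOn : IntegrableOn (fun s => φ s * f s) (Ioi 2) volume := by
    apply Integrable.mono'
      ((integrableOn_Ioi_rpow_of_lt (by norm_num : (-2:ℝ) < -1)
        (by norm_num : (0:ℝ) < 2)).const_mul M₄)
    · exact (hφfc.mono (fun x (hx : x ∈ Ioi (2:ℝ)) =>
        mem_Ioi.mpr (lt_trans one_lt_two hx))).aestronglyMeasurable measurableSet_Ioi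
    · refine (ae_restrict_iff' measurableSet_Ioi).mpr (ae_of_all _ fun s hs => ?_)
      rw [Real.norm_eq_abs]
      exact hkey2 s (le_of_lt hs)
  have Th := MeasureTheory.intervalIntegral_tendsto_integral_Ioi 2 hIntOn tendsto_id
  have Tgφ : Tendsto (fun ρ => g ρ * φ ρ) atTop
      (nhds (g 2 * φ 2 + ∫ s in Ioi (2:ℝ), φ s * f s)) := by
    apply Tendsto.congr' _ (tendsto_const_nhds.add Th)
    filter_upwards [eventually_ge_atTop (2:ℝ)] with ρ hρ
    simp only [id_eq]
    rw [FTCh ρ hρ]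
    ring
  have Tg : Tendsto g atTop (nhds (g 2 * φ 2 + ∫ s in Ioi (2:ℝ), φ s * f s)) := by
    have Tdiv := Tgφ.div (phi_tendsto ν) one_ne_zero
    apply Tendsto.congr' _ (by simpa using Tdiv)
    filter_upwards [eventually_ge_atTop (2:ℝ)] with ρ hρ
    have hφρ : φ ρ ≠ 0 := by have := hφ1 ρ hρ; linarith
    show g ρ * φ ρ / φ ρ = g ρ
    rw [mul_div_assoc, div_self hφρ, mul_one]
  set M₅ : ℝ := |g 2 * φ 2| + M₄ * (1/2) with hM₅def
  have hM₅0 : 0 ≤ M₅ := add_nonneg (abs_nonneg _) (by linarith)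
  have hg2b : ∀ ρ ≥ (2:ℝ), |g ρ| ≤ M₅ := by
    intro ρ hρ
    have hInt2 : |∫ s in (2:ℝ)..ρ, φ s * f s|
        ≤ M₄ * ((ρ^((-2:ℝ)+1) - 2^((-2:ℝ)+1))/((-2:ℝ)+1)) :=
      abs_integral_le_rpow _ ρ M₄ _ hρ (by norm_num) (hφfc.mono (hIccsub ρ hρ)) hM₄0
        (fun s hs => by
          have := hkey2 s hs.1
          rwa [show (-2:ℝ) = 1-3*(1:ℝ) by norm_num] at this ⊢)
    have hρ0 : (0:ℝ) < ρ := by linarith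
    have hρinv : 0 < ρ⁻¹ := by positivity
    have e1 : ((ρ^((-2:ℝ)+1) - 2^((-2:ℝ)+1))/((-2:ℝ)+1)) ≤ 1/2 := by
      rw [show ((-2:ℝ)+1) = (-1:ℝ) by norm_num, Real.rpow_neg_one, Real.rpow_neg_one]
      have e0 : (ρ⁻¹ - 2⁻¹)/(-1:ℝ) = 2⁻¹ - ρ⁻¹ := by ring
      rw [e0]
      linarith
    refine (hgle ρ hρ).trans ?_
    have h12 := hInt2.trans (mul_le_mul_of_nonneg_left e1 hM₄0)
    rw [hM₅def]
    linarith
  have hWb2 : ∀ s : ℝ, 2 ≤ s → |u s + s * deriv u s| ≤ M₅ * (s^2)⁻¹ := by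
    intro s hs
    have hs0 : (0:ℝ) < s := by linarith
    have hs2 : (0:ℝ) < s^2 := by positivity
    have e1 : |u s + s * deriv u s| = |g s| / s^2 := by
      rw [habsg s hs0]; field_simp
    have e2 : M₅ * (s^2)⁻¹ = M₅ / s^2 := by ring
    rw [e1, e2]
    gcongr
    exact hg2b s hs
  have hWIntOn : IntegrableOn (fun s : ℝ => u s + s * deriv u s) (Ioi 2) volume := by
    apply Integrable.mono'
      ((integrableOn_Ioi_rpow_of_lt (by norm_num : (-2:ℝ) < -1)
        (by norm_num : (0:ℝ) < 2)).const_mul M₅)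
    · exact (hWc.mono (fun x (hx : x ∈ Ioi (2:ℝ)) =>
        mem_Ioi.mpr (lt_trans (by norm_num) hx))).aestronglyMeasurable measurableSet_Ioi
    · refine (ae_restrict_iff' measurableSet_Ioi).mpr (ae_of_all _ fun s hs => ?_)
      rw [Real.norm_eq_abs]
      have hs0 : (0:ℝ) < s := lt_trans (by norm_num) hs
      have := hWb2 s (le_of_lt hs)
      rwa [show M₅ * s^(-2:ℝ) = M₅ * (s^2)⁻¹ by rw [Real.rpow_neg hs0.le, Real.rpow_two]]
  have Tw : Tendsto w atTop
      (nhds (w 2 + ∫ s in Ioi (2:ℝ), (u s + s * deriv u s))) := by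
    apply Tendsto.congr' _ (tendsto_const_nhds.add
      (MeasureTheory.intervalIntegral_tendsto_integral_Ioi 2 hWIntOn tendsto_id))
    filter_upwards [eventually_ge_atTop (2:ℝ)] with ρ hρ
    simp only [id_eq]
    rw [FTCw ρ hρ]
    ring
  refine ⟨⟨_, Tw⟩, ⟨_, Tg⟩, ?_⟩
  set C' : ℝ := C₁ + M₅ + 12*c₅ + 1 with hC'def
  have hC'pos : 0 < C' := by rw [hC'def]; linarith
  refine ⟨C', hC'pos, ?_⟩
  intro ρ hρ
  have hρ0 : (0:ℝ) < ρ := by linarith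
  have hρ20 : (0:ℝ) < ρ^2 := by positivity
  rcases le_total ρ 2 with hcase | hcase
  · have hu_ := hc₅u ρ ⟨hρ, hcase⟩
    have hu'_ := hc₅u' ρ ⟨hρ, hcase⟩
    have hinv1 : (2:ℝ)⁻¹ ≤ ρ⁻¹ := inv_anti₀ hρ0 hcase
    have hinv2 : (4:ℝ)⁻¹ ≤ (ρ^2)⁻¹ := inv_anti₀ hρ20 (by nlinarith)
    refine ⟨?_, ?_, ?_⟩
    · calc |u ρ| ≤ c₅ := hu_
        _ = 2*c₅ * 2⁻¹ := by ring
        _ ≤ 2*c₅ * ρ⁻¹ := mul_le_mul_of_nonneg_left hinv1 (by linarith)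
        _ ≤ C' * ρ⁻¹ :=
            mul_le_mul_of_nonneg_right (by rw [hC'def]; linarith) (by positivity)
    · calc |deriv u ρ| ≤ c₅ := hu'_
        _ = 4*c₅ * 4⁻¹ := by ring
        _ ≤ 4*c₅ * (ρ^2)⁻¹ := mul_le_mul_of_nonneg_left hinv2 (by linarith)
        _ ≤ C' * (ρ^2)⁻¹ :=
            mul_le_mul_of_nonneg_right (by rw [hC'def]; linarith) (by positivity)
    · have e : |ρ * deriv u ρ| = ρ * |deriv u ρ| := by rw [abs_mul, abs_of_pos hρ0]
      calc |u ρ + ρ * deriv u ρ| ≤ |u ρ| + |ρ * deriv u ρ| := abs_add_le _ _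
        _ ≤ c₅ + 2*c₅ := by rw [e]; nlinarith [abs_nonneg (deriv u ρ)]
        _ = 12*c₅ * 4⁻¹ := by ring
        _ ≤ 12*c₅ * (ρ^2)⁻¹ := mul_le_mul_of_nonneg_left hinv2 (by linarith)
        _ ≤ C' * (ρ^2)⁻¹ :=
            mul_le_mul_of_nonneg_right (by rw [hC'def]; linarith) (by positivity)
  · have hub : |u ρ| ≤ C₁ * ρ⁻¹ := by
      have h := hdec1 ρ hρ
      rwa [Real.rpow_neg_one] at h
    have hXb : |u ρ + ρ * deriv u ρ| ≤ M₅ * (ρ^2)⁻¹ := hWb2 ρ hcase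
    refine ⟨?_, ?_, ?_⟩
    · exact hub.trans
        (mul_le_mul_of_nonneg_right (by rw [hC'def]; linarith) (by positivity))
    · have hder : ρ * |deriv u ρ| ≤ M₅ * (ρ^2)⁻¹ + C₁ * ρ⁻¹ := by
        calc ρ * |deriv u ρ| = |ρ * deriv u ρ| := by rw [abs_mul, abs_of_pos hρ0]
          _ = |(u ρ + ρ * deriv u ρ) - u ρ| := by ring_nf
          _ ≤ |u ρ + ρ * deriv u ρ| + |u ρ| := abs_sub _ _
          _ ≤ M₅ * (ρ^2)⁻¹ + C₁ * ρ⁻¹ := add_le_add hXb hub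
      have h9 : (ρ^2)⁻¹ ≤ ρ⁻¹ := inv_anti₀ hρ0 (by nlinarith)
      have hfin : M₅ * (ρ^2)⁻¹ + C₁ * ρ⁻¹ ≤ (M₅ + C₁) * ρ⁻¹ := by
        have := mul_le_mul_of_nonneg_left h9 hM₅0
        linarith
      have h10 : ρ * |deriv u ρ| ≤ (M₅ + C₁) * ρ⁻¹ := hder.trans hfin
      have e2 : (M₅ + C₁) * ρ⁻¹ = ρ * ((M₅ + C₁) * (ρ^2)⁻¹) := by
        field_simp
      rw [e2] at h10
      have h11 : |deriv u ρ| ≤ (M₅ + C₁) * (ρ^2)⁻¹ := le_of_mul_le_mul_left h10 hρ0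
      exact h11.trans
        (mul_le_mul_of_nonneg_right (by rw [hC'def]; linarith) (by positivity))
    · exact hXb.trans
        (mul_le_mul_of_nonneg_right (by rw [hC'def]; linarith) (by positivity))
end

section
/- Let n ≥ 5 be an integer, let f₀(ρ) := 2 arctan(ρ/√(n−4)) and define w(ρ) := 1/(ρ² + n − 4) for ρ > 0. Then 2 sin²(f₀(ρ)) = 8(n−4)ρ²/(ρ² + n − 4)² for all ρ > 0, and w satisfies the eigenvalue equation (1−ρ²) w''(ρ) + ((n−1)/ρ − 6ρ) w'(ρ) − 6 w(ρ) + (n−3)/ρ² · 2 sin²(f₀(ρ)) · w(ρ) = 0 for all ρ ∈ (0,∞). -/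
open Real Set

lemma aux_d1 (c : ℝ) (hc : 0 < c) (σ : ℝ) :
    HasDerivAt (fun σ : ℝ => 1 / (σ^2 + c)) (-2*σ/(σ^2+c)^2) σ := by
  have hne : σ^2 + c ≠ 0 := by positivity
  have h := ((hasDerivAt_pow 2 σ).add_const c).inv hne
  simpa [one_div, pow_one, Pi.inv_def] using h.congr_deriv (by ring)

lemma aux_d2 (c : ℝ) (hc : 0 < c) (σ : ℝ) :
    HasDerivAt (fun σ : ℝ => -2*σ/(σ^2+c)^2) ((6*σ^2 - 2*c)/(σ^2+c)^3) σ := by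
  have hne : σ^2 + c ≠ 0 := by positivity
  have hne2 : (σ^2 + c)^2 ≠ 0 := pow_ne_zero _ hne
  have hf : HasDerivAt (fun σ : ℝ => -2*σ) (-2) σ := by
    simpa using (hasDerivAt_id σ).const_mul (-2 : ℝ)
  have hg : HasDerivAt (fun σ : ℝ => (σ^2+c)^2) (2*(σ^2+c)*(2*σ)) σ := by
    have := (((hasDerivAt_pow 2 σ).add_const c).pow 2)
    simpa [pow_one, mul_comm, mul_assoc, mul_left_comm, Pi.pow_def] using this
  have h := hf.div hg hne2
  refine h.congr_deriv ?_
  field_simp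
  ring

/-- with f₀(ρ) = 2 arctan(ρ/√(n−4)) one has
2 sin²(f₀(ρ)) = 8(n−4)ρ²/(ρ² + n − 4)², and w(ρ) = 1/(ρ² + n − 4) solves the λ = 1
eigenvalue equation of the linearization around the ground state. -/
theorem stmt_16 (n : ℕ) (hn : 5 ≤ n) :
    (∀ ρ > (0:ℝ),
      2 * Real.sin (2 * Real.arctan (ρ / Real.sqrt ((n:ℝ) - 4)))^2
        = 8 * ((n:ℝ) - 4) * ρ^2 / (ρ^2 + (n:ℝ) - 4)^2) ∧
    (∀ ρ > (0:ℝ),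
      (1 - ρ^2) * deriv (deriv (fun σ : ℝ => 1 / (σ^2 + (n:ℝ) - 4))) ρ
        + (((n:ℝ) - 1)/ρ - 6*ρ) * deriv (fun σ : ℝ => 1 / (σ^2 + (n:ℝ) - 4)) ρ
        - 6 * (1 / (ρ^2 + (n:ℝ) - 4))
        + ((n:ℝ) - 3)/ρ^2 * (2 * Real.sin (2 * Real.arctan (ρ / Real.sqrt ((n:ℝ) - 4)))^2)
          * (1 / (ρ^2 + (n:ℝ) - 4)) = 0) := by
  have hc : (0:ℝ) < (n:ℝ) - 4 := by
    have : (5:ℝ) ≤ (n:ℝ) := by exact_mod_cast hn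
    linarith
  set c : ℝ := (n:ℝ) - 4 with hcdef
  have hsq : Real.sqrt c ^ 2 = c := Real.sq_sqrt hc.le
  have hsqpos : 0 < Real.sqrt c := Real.sqrt_pos.mpr hc
  have hsin : ∀ ρ : ℝ, 0 < ρ →
      2 * Real.sin (2 * Real.arctan (ρ / Real.sqrt c))^2
        = 8 * c * ρ^2 / (ρ^2 + c)^2 := by
    intro ρ hρ
    set x : ℝ := ρ / Real.sqrt c with hx
    have h1x : 0 < 1 + x^2 := by positivity
    have hs : Real.sin (2 * Real.arctan x) = 2 * x / (1 + x^2) := by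
      rw [Real.sin_two_mul, Real.sin_arctan, Real.cos_arctan]
      have hsne : Real.sqrt (1 + x^2) ≠ 0 := by positivity
      field_simp
      rw [Real.sq_sqrt h1x.le]
    rw [hs]
    have hxc : 1 + x^2 = (ρ^2 + c) / c := by
      field_simp [hx, hsq]
      rw [hx, div_pow, hsq, add_mul, div_mul_cancel₀ _ hc.ne']
      ring
    rw [hxc]
    have hdc : (ρ^2 + c) ≠ 0 := by positivity
    field_simp [hx]
    rw [hx, div_pow, hsq, mul_assoc, div_mul_cancel₀ _ hc.ne']
    ring
  constructor
  · intro ρ hρ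
    have := hsin ρ hρ
    -- c = n - 4 ; goal has (ρ^2 + n - 4), same as ρ^2 + c
    calc 2 * Real.sin (2 * Real.arctan (ρ / Real.sqrt ((n:ℝ) - 4)))^2
        = 8 * c * ρ^2 / (ρ^2 + c)^2 := this
      _ = 8 * ((n:ℝ) - 4) * ρ^2 / (ρ^2 + (n:ℝ) - 4)^2 := by rw [hcdef]; ring_nf
  · intro ρ hρ
    have hwfun : (fun σ : ℝ => 1 / (σ^2 + (n:ℝ) - 4)) = fun σ : ℝ => 1 / (σ^2 + c) := by
      funext σ; rw [hcdef]; ring_nf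
    have hd1 : deriv (fun σ : ℝ => 1 / (σ^2 + (n:ℝ) - 4)) ρ = -2*ρ/(ρ^2+c)^2 := by
      rw [hwfun]; exact (aux_d1 c hc ρ).deriv
    have hd1' : deriv (fun σ : ℝ => 1 / (σ^2 + (n:ℝ) - 4)) = fun σ => -2*σ/(σ^2+c)^2 := by
      funext σ; rw [hwfun]; exact (aux_d1 c hc σ).deriv
    have hd2 : deriv (deriv (fun σ : ℝ => 1 / (σ^2 + (n:ℝ) - 4))) ρ
        = (6*ρ^2 - 2*c)/(ρ^2+c)^3 := by
      rw [hd1']; exact (aux_d2 c hc ρ).deriv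
    rw [hd2, hd1, hsin ρ hρ]
    have hD : (ρ^2 + c) ≠ 0 := by positivity
    have hρne : ρ ≠ 0 := ne_of_gt hρ
    have hnc : (n:ℝ) = c + 4 := by rw [hcdef]; ring
    rw [hnc]
    have h1 : ρ^2 + (c+4) - 4 = ρ^2 + c := by ring
    rw [h1]
    field_simp
    ring
end
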